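/- arXiv:2102.08883 — 9 statements merged into one kernel-verified Lean document; each statement's English description precedes it below -/
import Mathlib

section
/- Let X be a normed space and let (x_k) be a sequence in X. If a series ∑_k x_k is weakly unconditionally Cauchy (i.e., ∑_k |x*(x_k)| < ∞ for every continuous linear functional x* on X), then there exists a constant H > 0 such that for every n and every choice of scalars a_1, ..., a_n with |a_k| ≤ 1, one has ‖∑_{k=1}^n a_k x_k‖ ≤ H. -/
open Filter Finset Topology

/-- If a series in a normed space is weakly unconditionally Cauchy, then the
partial sums with multipliers from the unit ball are uniformly bounded. -/
theorem wuC_uniform_bound {X : Type*} [NormedAddCommGroup X] [NormedSpace ℝ X]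
    (x : ℕ → X) (hwuC : ∀ φ : X →L[ℝ] ℝ, Summable fun k => |φ (x k)|) :
    ∃ H > 0, ∀ n : ℕ, ∀ a : ℕ → ℝ, (∀ k, |a k| ≤ 1) →
      ‖∑ k ∈ Finset.range n, a k • x k‖ ≤ H := by
  -- evaluation functionals on the dual
  set ev : ℕ → (X →L[ℝ] ℝ) →L[ℝ] ℝ := fun k => ContinuousLinearMap.apply ℝ ℝ (x k) with hev
  set g : ℕ × (ℕ → Bool) → (X →L[ℝ] ℝ) →L[ℝ] ℝ :=
    fun p => ∑ k ∈ Finset.range p.1, (if p.2 k then (1:ℝ) else -1) • ev k with hg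
  have hgapply : ∀ p φ, g p φ = ∑ k ∈ Finset.range p.1,
      (if p.2 k then (1:ℝ) else -1) * φ (x k) := by
    intro p φ
    simp only [hg, hev, ContinuousLinearMap.coe_sum', Finset.sum_apply,
      ContinuousLinearMap.smul_apply, smul_eq_mul, ContinuousLinearMap.apply_apply]
  have hpt : ∀ φ : X →L[ℝ] ℝ, ∃ C, ∀ p, ‖g p φ‖ ≤ C := by
    intro φ
    refine ⟨∑' k, |φ (x k)|, fun p => ?_⟩
    rw [hgapply, Real.norm_eq_abs]
    calc |∑ k ∈ Finset.range p.1, (if p.2 k then (1:ℝ) else -1) * φ (x k)|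
        ≤ ∑ k ∈ Finset.range p.1, |(if p.2 k then (1:ℝ) else -1) * φ (x k)| :=
          Finset.abs_sum_le_sum_abs _ _
      _ = ∑ k ∈ Finset.range p.1, |φ (x k)| := by
          refine Finset.sum_congr rfl fun k _ => ?_
          rcases p.2 k with _ | _ <;> simp [abs_mul]
      _ ≤ ∑' k, |φ (x k)| := Summable.sum_le_tsum _ (fun k _ => abs_nonneg _) (hwuC φ)
  obtain ⟨C, hC⟩ := banach_steinhaus hpt
  refine ⟨max C 1, lt_of_lt_of_le one_pos (le_max_right _ _), ?_⟩
  intro n a ha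
  refine NormedSpace.norm_le_dual_bound ℝ _ (le_trans zero_le_one (le_max_right _ _))
    (fun φ => ?_)
  have key : ∑ k ∈ Finset.range n, |φ (x k)| ≤ C * ‖φ‖ := by
    have := hC (n, fun k => decide (0 ≤ φ (x k)))
    have hle := (g (n, fun k => decide (0 ≤ φ (x k)))).le_of_opNorm_le this φ
    rw [hgapply] at hle
    have : ∑ k ∈ Finset.range n, (if decide (0 ≤ φ (x k)) then (1:ℝ) else -1) * φ (x k)
        = ∑ k ∈ Finset.range n, |φ (x k)| := by
      refine Finset.sum_congr rfl fun k _ => ?_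
      by_cases h : 0 ≤ φ (x k)
      · simp [h, abs_of_nonneg h]
      · simp [h, abs_of_neg (lt_of_not_ge h)]
    rw [this] at hle
    calc ∑ k ∈ Finset.range n, |φ (x k)| ≤ ‖∑ k ∈ Finset.range n, |φ (x k)|‖ :=
          le_abs_self _
      _ ≤ C * ‖φ‖ := hle
  calc ‖φ (∑ k ∈ Finset.range n, a k • x k)‖
      = |∑ k ∈ Finset.range n, a k * φ (x k)| := by simp [Real.norm_eq_abs]
    _ ≤ ∑ k ∈ Finset.range n, |a k * φ (x k)| := Finset.abs_sum_le_sum_abs _ _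
    _ ≤ ∑ k ∈ Finset.range n, |φ (x k)| := by
        refine Finset.sum_le_sum fun k _ => ?_
        rw [abs_mul]
        exact mul_le_of_le_one_left (abs_nonneg _) (ha k)
    _ ≤ C * ‖φ‖ := key
    _ ≤ max C 1 * ‖φ‖ := mul_le_mul_of_nonneg_right (le_max_left _ _) (norm_nonneg _)
end

section
/- Let X be a Banach space and let ∑_k x_k be a formal series in X. The series ∑_k x_k is weakly unconditionally Cauchy if and only if for every null scalar sequence (t_k) (i.e., t_k → 0) the series ∑_k t_k x_k converges in X. -/
open Filter Finset Topology

private lemma sqrt_comp_atTop {f : ℕ → ℝ} (hf : Tendsto f atTop atTop) :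
    Tendsto (fun n => Real.sqrt (f n)) atTop atTop := by
  rw [tendsto_atTop]
  intro b
  filter_upwards [hf.eventually_ge_atTop (b ^ 2)] with n hn
  calc b ≤ |b| := le_abs_self b
    _ = Real.sqrt (b ^ 2) := (Real.sqrt_sq_eq_abs b).symm
    _ ≤ Real.sqrt (f n) := Real.sqrt_le_sqrt hn

private lemma sign_mul_self_eq_abs (r : ℝ) : Real.sign r * r = |r| := by
  rcases lt_trichotomy r 0 with h | h | h
  · rw [Real.sign_of_neg h, abs_of_neg h]; ring
  · simp [h]
  · rw [Real.sign_of_pos h, abs_of_pos h]; ring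

private lemma wuC_bound {X : Type*} [NormedAddCommGroup X] [NormedSpace ℝ X] (x : ℕ → X)
    (h : ∀ φ : X →L[ℝ] ℝ, Summable fun k => |φ (x k)|) :
    ∃ C : ℝ, 0 ≤ C ∧ ∀ (F : Finset ℕ) (s : ℕ → ℝ), (∀ k, |s k| ≤ 1) →
      ‖∑ k ∈ F, s k • x k‖ ≤ C := by
  classical
  set ι : Type _ := Finset ℕ × {s : ℕ → ℝ // ∀ k, |s k| ≤ 1} with hι
  let g : ι → (X →L[ℝ] ℝ) →L[ℝ] ℝ := fun i =>
    ∑ k ∈ i.1, i.2.1 k • ContinuousLinearMap.apply ℝ ℝ (x k)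
  have hg : ∀ (i : ι) (φ : X →L[ℝ] ℝ), g i φ = ∑ k ∈ i.1, i.2.1 k * φ (x k) := by
    intro i φ
    simp [g, ContinuousLinearMap.sum_apply]
  have hpt : ∀ φ : X →L[ℝ] ℝ, ∃ C, ∀ i, ‖g i φ‖ ≤ C := by
    intro φ
    refine ⟨∑' k, |φ (x k)|, fun i => ?_⟩
    rw [hg, Real.norm_eq_abs]
    calc |∑ k ∈ i.1, i.2.1 k * φ (x k)| ≤ ∑ k ∈ i.1, |i.2.1 k * φ (x k)| :=
          Finset.abs_sum_le_sum_abs _ _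
      _ ≤ ∑ k ∈ i.1, |φ (x k)| := by
          refine Finset.sum_le_sum fun k _ => ?_
          rw [abs_mul]
          exact mul_le_of_le_one_left (abs_nonneg _) (i.2.2 k)
      _ ≤ ∑' k, |φ (x k)| := Summable.sum_le_tsum _ (fun k _ => abs_nonneg _) (h φ)
  obtain ⟨C', hC'⟩ := banach_steinhaus hpt
  refine ⟨max C' 0, le_max_right _ _, fun F s hs => ?_⟩
  refine NormedSpace.norm_le_dual_bound ℝ _ (le_max_right _ _) fun φ => ?_
  have : φ (∑ k ∈ F, s k • x k) = g (F, ⟨s, hs⟩) φ := by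
    rw [hg, map_sum]
    simp
  rw [this]
  calc ‖g (F, ⟨s, hs⟩) φ‖ ≤ ‖g (F, ⟨s, hs⟩)‖ * ‖φ‖ := (g _).le_opNorm φ
    _ ≤ max C' 0 * ‖φ‖ := by
        gcongr
        exact le_max_of_le_left (hC' _)

/-- In a Banach space, a series is weakly unconditionally Cauchy iff it is
`c₀`-multiplier convergent. -/
theorem wuC_iff_c0_multiplier_convergent
    {X : Type*} [NormedAddCommGroup X] [NormedSpace ℝ X] [CompleteSpace X] (x : ℕ → X) :
    (∀ φ : X →L[ℝ] ℝ, Summable fun k => |φ (x k)|) ↔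
    (∀ t : ℕ → ℝ, Tendsto t atTop (𝓝 0) → ∃ y : X,
        Tendsto (fun n => ∑ k ∈ Finset.range n, t k • x k) atTop (𝓝 y)) := by
  constructor
  · intro h t ht
    obtain ⟨C, hC0, hC⟩ := wuC_bound x h
    have hC1 : (0:ℝ) < C + 1 := by linarith
    have hcauchy : CauchySeq (fun n => ∑ k ∈ Finset.range n, t k • x k) := by
      rw [Metric.cauchySeq_iff']
      intro ε hε
      set δ : ℝ := ε / (2 * (C + 1)) with hδdef
      have hδ : 0 < δ := by positivity
      obtain ⟨N, hN⟩ := (Metric.tendsto_atTop.mp ht δ hδ)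
      refine ⟨N, fun n hn => ?_⟩
      rw [dist_eq_norm, ← Finset.sum_Ico_eq_sub _ hn]
      set s : ℕ → ℝ := fun k => if N ≤ k then t k / δ else 0 with hsdef
      have hs : ∀ k, |s k| ≤ 1 := by
        intro k
        by_cases hk : N ≤ k
        · have := hN k hk
          rw [dist_zero_right, Real.norm_eq_abs] at this
          simp only [hsdef, if_pos hk, abs_div, abs_of_pos hδ]
          rw [div_le_one hδ]
          exact this.le
        · simp [hsdef, if_neg hk]
      have hrw : ∑ k ∈ Finset.Ico N n, t k • x k
          = δ • ∑ k ∈ Finset.Ico N n, s k • x k := by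
        rw [Finset.smul_sum]
        refine Finset.sum_congr rfl fun k hk => ?_
        have hk' : N ≤ k := (Finset.mem_Ico.mp hk).1
        rw [hsdef]
        simp only [if_pos hk']
        rw [smul_smul, mul_div_cancel₀ _ hδ.ne']
      rw [hrw, norm_smul, Real.norm_eq_abs, abs_of_pos hδ]
      have hb := hC (Finset.Ico N n) s hs
      calc δ * ‖∑ k ∈ Finset.Ico N n, s k • x k‖ ≤ δ * (C + 1) := by
            apply mul_le_mul_of_nonneg_left _ hδ.le
            linarith
        _ = ε / 2 := by
            rw [hδdef]; field_simp
        _ < ε := by linarith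
    exact cauchySeq_tendsto_of_complete hcauchy
  · intro h φ
    by_contra hns
    set S : ℕ → ℝ := fun n => ∑ k ∈ Finset.range n, |φ (x k)| with hSdef
    have hS : Tendsto S atTop atTop :=
      (not_summable_iff_tendsto_nat_atTop_of_nonneg (fun k => abs_nonneg _)).mp hns
    set t : ℕ → ℝ := fun k => Real.sign (φ (x k)) * (Real.sqrt (1 + S (k + 1)))⁻¹ with htdef
    have hSnonneg : ∀ n, 0 ≤ S n := fun n => Finset.sum_nonneg fun k _ => abs_nonneg _
    have hSpos : ∀ n, (0:ℝ) < 1 + S n := fun n => by have := hSnonneg n; linarith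
    have hsqrtpos : ∀ n, 0 < Real.sqrt (1 + S n) := fun n => Real.sqrt_pos.mpr (hSpos n)
    have ht : Tendsto t atTop (𝓝 0) := by
      have h1 : Tendsto (fun k : ℕ => (Real.sqrt (1 + S (k + 1)))⁻¹) atTop (𝓝 0) := by
        apply Tendsto.inv_tendsto_atTop
        apply sqrt_comp_atTop
        exact tendsto_atTop_add_const_left _ _ (hS.comp (tendsto_add_atTop_nat 1))
      apply squeeze_zero_norm _ h1
      intro k
      rw [htdef, Real.norm_eq_abs, abs_mul]
      calc |Real.sign (φ (x k))| * |(Real.sqrt (1 + S (k + 1)))⁻¹|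
          ≤ 1 * |(Real.sqrt (1 + S (k + 1)))⁻¹| := by
            gcongr
            rcases lt_trichotomy (φ (x k)) 0 with hh | hh | hh
            · rw [Real.sign_of_neg hh]; norm_num
            · rw [hh, Real.sign_zero]; norm_num
            · rw [Real.sign_of_pos hh]; norm_num
        _ = (Real.sqrt (1 + S (k + 1)))⁻¹ := by
            rw [one_mul, abs_of_pos (inv_pos.mpr (hsqrtpos _))]
    obtain ⟨y, hy⟩ := h t ht
    have hφy : Tendsto (fun n => φ (∑ k ∈ Finset.range n, t k • x k)) atTop (𝓝 (φ y)) :=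
      (φ.continuous.tendsto y).comp hy
    have hdiv : Tendsto (fun n => φ (∑ k ∈ Finset.range n, t k • x k)) atTop atTop := by
      have hkey : ∀ n, Real.sqrt (1 + S n) - Real.sqrt (1 + S 0)
          ≤ φ (∑ k ∈ Finset.range n, t k • x k) := by
        intro n
        have hφsum : φ (∑ k ∈ Finset.range n, t k • x k)
            = ∑ k ∈ Finset.range n, |φ (x k)| * (Real.sqrt (1 + S (k + 1)))⁻¹ := by
          rw [map_sum]
          refine Finset.sum_congr rfl fun k _ => ?_
          rw [map_smul, smul_eq_mul, htdef]
          rw [mul_comm (|φ (x k)|)]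
          rw [mul_assoc, ← sign_mul_self_eq_abs (φ (x k))]
          ring
        rw [hφsum, ← Finset.sum_range_sub (fun n => Real.sqrt (1 + S n)) n]
        refine Finset.sum_le_sum fun k _ => ?_
        -- key inequality: √(1+S(k+1)) - √(1+S k) ≤ |φ (x k)| / √(1+S(k+1))
        have hstep : S (k + 1) = S k + |φ (x k)| := by
          rw [hSdef]; exact Finset.sum_range_succ _ k
        set a := Real.sqrt (1 + S k) with ha
        set b := Real.sqrt (1 + S (k + 1)) with hb
        have hab : a ≤ b := by
          apply Real.sqrt_le_sqrt
          have : S k ≤ S (k + 1) := by rw [hstep]; linarith [abs_nonneg (φ (x k))]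
          linarith
        have hbpos : 0 < b := hsqrtpos _
        have hapos : 0 < a := hsqrtpos _
        rw [sub_le_iff_le_add, ← sub_le_iff_le_add']
        -- b - a ≤ |φ (x k)| * b⁻¹
        have hbb : b * b = 1 + S (k + 1) := Real.mul_self_sqrt (hSpos _).le
        have haa : a * a = 1 + S k := Real.mul_self_sqrt (hSpos _).le
        rw [← sub_nonneg]
        have key : |φ (x k)| * b⁻¹ - (b - a) = (a * b - a * a) * b⁻¹ := by
          field_simp
          nlinarith [hbb, haa, hstep]
        have hnn : 0 ≤ (a * b - a * a) * b⁻¹ :=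
          mul_nonneg (by nlinarith) (inv_pos.mpr hbpos).le
        linarith [key, hnn]
      refine tendsto_atTop_mono hkey ?_
      apply tendsto_atTop_add_const_right
      exact sqrt_comp_atTop (tendsto_atTop_add_const_left _ _ hS)
    exact not_tendsto_nhds_of_tendsto_atTop hdiv (φ y) hφy
end

section
/- Let X and Y be Banach spaces and T_k ∈ B(X,Y) for all k. If the series ∑_k T_k is c_0(X)-multiplier convergent (i.e., ∑_k T_k x_k converges in Y for every null sequence (x_k) in X), then the space M^∞_R(∑_k T_k) = { x = (x_k) ∈ ℓ_∞(X) : ∑_k T_k x_k is Riesz convergent in Y }, equipped with the sup norm ‖x‖ = sup_k ‖x_k‖, is a Banach space. -/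
open Filter Finset Topology BoundedContinuousFunction

/-- A series `∑ s k` is Riesz convergent to `l` (w.r.t. weights `r`) if the Riesz
means of its partial sums converge in norm to `l`. -/
def RieszSeriesConvTo {Y : Type*} [NormedAddCommGroup Y] [NormedSpace ℝ Y]
    (r : ℕ → ℝ) (s : ℕ → Y) (l : Y) : Prop :=
  Tendsto (fun n => (∑ k ∈ Finset.range (n + 1), r k)⁻¹ •
      ∑ k ∈ Finset.range (n + 1), r k • (∑ j ∈ Finset.range (k + 1), s j))
    atTop (𝓝 l)

open ZeroAtInfty ZeroAtInftyContinuousMap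

/-- Partial sum operator on `C₀(ℕ, X)`. -/
noncomputable def partialSumCLM {X Y : Type*} [NormedAddCommGroup X] [NormedSpace ℝ X]
    [NormedAddCommGroup Y] [NormedSpace ℝ Y] (T : ℕ → X →L[ℝ] Y) (n : ℕ) :
    C₀(ℕ, X) →L[ℝ] Y :=
  LinearMap.mkContinuous
    { toFun := fun f => ∑ k ∈ Finset.range n, T k (f k)
      map_add' := by intro f g; simp [Finset.sum_add_distrib]
      map_smul' := by intro c f; simp [Finset.smul_sum] }
    (∑ k ∈ Finset.range n, ‖T k‖)
    (by
      intro f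
      calc ‖∑ k ∈ Finset.range n, T k (f k)‖
          ≤ ∑ k ∈ Finset.range n, ‖T k (f k)‖ := norm_sum_le _ _
        _ ≤ ∑ k ∈ Finset.range n, ‖T k‖ * ‖f‖ := by
            refine Finset.sum_le_sum fun k _ => ?_
            refine le_trans ((T k).le_opNorm _) ?_
            refine mul_le_mul_of_nonneg_left ?_ (norm_nonneg _)
            rw [← ZeroAtInftyContinuousMap.norm_toBCF_eq_norm]
            exact f.toBCF.norm_coe_le_norm k
        _ = (∑ k ∈ Finset.range n, ‖T k‖) * ‖f‖ := by rw [Finset.sum_mul])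

@[simp] theorem partialSumCLM_apply {X Y : Type*} [NormedAddCommGroup X] [NormedSpace ℝ X]
    [NormedAddCommGroup Y] [NormedSpace ℝ Y] (T : ℕ → X →L[ℝ] Y) (n : ℕ) (f : C₀(ℕ, X)) :
    partialSumCLM T n f = ∑ k ∈ Finset.range n, T k (f k) := rfl

/-- Truncation of a bounded sequence, as an element of `C₀(ℕ, X)`. -/
noncomputable def truncC0 {X : Type*} [NormedAddCommGroup X] (f : ℕ →ᵇ X) (n : ℕ) :
    C₀(ℕ, X) where
  toFun := fun k => if k < n then f k else 0
  continuous_toFun := continuous_of_discreteTopology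
  zero_at_infty' := by
    rw [cocompact_eq_atTop]
    refine tendsto_nhds_of_eventually_eq ?_
    filter_upwards [eventually_ge_atTop n] with k hk
    exact if_neg (not_lt.2 hk)

theorem truncC0_norm_le {X : Type*} [NormedAddCommGroup X] (f : ℕ →ᵇ X) (n : ℕ) :
    ‖truncC0 f n‖ ≤ ‖f‖ := by
  rw [← ZeroAtInftyContinuousMap.norm_toBCF_eq_norm]
  refine (BoundedContinuousFunction.norm_le (norm_nonneg f)).2 fun k => ?_
  show ‖(if k < n then f k else 0 : X)‖ ≤ ‖f‖
  split
  · exact f.norm_coe_le_norm k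
  · simpa using norm_nonneg f

/-- If `∑ T k` is `c₀(X)`-multiplier convergent, then the multiplier space
`M^∞_R(∑ T k)` (realized as a subset of the Banach space of bounded `X`-valued
sequences with the sup norm) is complete, i.e. a Banach space. -/
theorem MR_complete_of_c0_multiplier_convergent
    {X Y : Type*} [NormedAddCommGroup X] [NormedSpace ℝ X] [CompleteSpace X]
    [NormedAddCommGroup Y] [NormedSpace ℝ Y] [CompleteSpace Y]
    (r : ℕ → ℝ) (hr0 : 0 < r 0) (hr : ∀ k, 0 ≤ r k)
    (hR : Tendsto (fun n => ∑ k ∈ Finset.range n, r k) atTop atTop)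
    (T : ℕ → X →L[ℝ] Y)
    (hc0 : ∀ x : ℕ → X, Tendsto x atTop (𝓝 0) → ∃ y : Y,
        Tendsto (fun n => ∑ k ∈ Finset.range n, T k (x k)) atTop (𝓝 y)) :
    IsComplete {f : ℕ →ᵇ X | ∃ y : Y, RieszSeriesConvTo r (fun k => T k (f k)) y} := by
  -- Banach–Steinhaus: partial sum operators on `C₀(ℕ, X)` are uniformly bounded.
  obtain ⟨C, hC⟩ : ∃ C, ∀ n, ‖partialSumCLM T n‖ ≤ C := by
    apply banach_steinhaus
    intro f
    have hf0 : Tendsto (fun k => f k) atTop (𝓝 0) := by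
      have := zero_at_infty (f : C₀(ℕ, X))
      rwa [cocompact_eq_atTop] at this
    obtain ⟨y, hy⟩ := hc0 (fun k => f k) hf0
    have : Tendsto (fun n => ‖partialSumCLM T n f‖) atTop (𝓝 ‖y‖) := by
      simp only [partialSumCLM_apply]; exact hy.norm
    obtain ⟨C, hCb⟩ := this.bddAbove_range
    exact ⟨C, fun n => hCb (Set.mem_range_self n)⟩
  have hC0 : 0 ≤ C := le_trans (norm_nonneg (partialSumCLM T 0)) (hC 0)
  -- Uniform bound for partial sums applied to bounded sequences.
  have key : ∀ (f : ℕ →ᵇ X) (n : ℕ),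
      ‖∑ k ∈ Finset.range n, T k (f k)‖ ≤ C * ‖f‖ := by
    intro f n
    have heq : ∑ k ∈ Finset.range n, T k (f k) = partialSumCLM T n (truncC0 f n) := by
      rw [partialSumCLM_apply]
      refine Finset.sum_congr rfl fun k hk => ?_
      have : (truncC0 f n) k = f k := if_pos (Finset.mem_range.1 hk)
      rw [this]
    rw [heq]
    calc ‖partialSumCLM T n (truncC0 f n)‖
        ≤ ‖partialSumCLM T n‖ * ‖truncC0 f n‖ := (partialSumCLM T n).le_opNorm _
      _ ≤ C * ‖f‖ := mul_le_mul (hC n) (truncC0_norm_le f n) (norm_nonneg _) hC0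
  -- Riesz mean operators on `ℕ →ᵇ X`.
  set A : ℕ → (ℕ →ᵇ X) →L[ℝ] Y := fun n =>
    (∑ k ∈ Finset.range (n + 1), r k)⁻¹ •
      ∑ k ∈ Finset.range (n + 1), r k •
        ∑ j ∈ Finset.range (k + 1), (T j).comp (evalCLM ℝ j) with hAdef
  have hA : ∀ (f : ℕ →ᵇ X) (n : ℕ),
      A n f = (∑ k ∈ Finset.range (n + 1), r k)⁻¹ •
        ∑ k ∈ Finset.range (n + 1), r k •
          (∑ j ∈ Finset.range (k + 1), T j (f j)) := by
    intro f n
    simp [hAdef, ContinuousLinearMap.sum_apply]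
  have hRn : ∀ n, 0 < ∑ k ∈ Finset.range (n + 1), r k := fun n =>
    lt_of_lt_of_le hr0 (Finset.single_le_sum (fun i _ => hr i) (Finset.mem_range.2 n.succ_pos))
  -- The operators `A n` are uniformly bounded by `C`.
  have hAle : ∀ (f : ℕ →ᵇ X) (n : ℕ), ‖A n f‖ ≤ C * ‖f‖ := by
    intro f n
    rw [hA]
    rw [norm_smul, Real.norm_eq_abs, abs_of_pos (inv_pos.2 (hRn n))]
    have h1 : ‖∑ k ∈ Finset.range (n + 1), r k •
        (∑ j ∈ Finset.range (k + 1), T j (f j))‖ ≤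
        (∑ k ∈ Finset.range (n + 1), r k) * (C * ‖f‖) := by
      calc ‖∑ k ∈ Finset.range (n + 1), r k • (∑ j ∈ Finset.range (k + 1), T j (f j))‖
          ≤ ∑ k ∈ Finset.range (n + 1),
            ‖r k • (∑ j ∈ Finset.range (k + 1), T j (f j))‖ := norm_sum_le _ _
        _ ≤ ∑ k ∈ Finset.range (n + 1), r k * (C * ‖f‖) := by
            refine Finset.sum_le_sum fun k _ => ?_
            rw [norm_smul, Real.norm_eq_abs, abs_of_nonneg (hr k)]
            exact mul_le_mul_of_nonneg_left (key f (k + 1)) (hr k)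
        _ = (∑ k ∈ Finset.range (n + 1), r k) * (C * ‖f‖) := by rw [Finset.sum_mul]
    calc (∑ k ∈ Finset.range (n + 1), r k)⁻¹ *
        ‖∑ k ∈ Finset.range (n + 1), r k • (∑ j ∈ Finset.range (k + 1), T j (f j))‖
        ≤ (∑ k ∈ Finset.range (n + 1), r k)⁻¹ *
          ((∑ k ∈ Finset.range (n + 1), r k) * (C * ‖f‖)) :=
          mul_le_mul_of_nonneg_left h1 (inv_nonneg.2 (hRn n).le)
      _ = C * ‖f‖ := by
          rw [← mul_assoc, inv_mul_cancel₀ (hRn n).ne', one_mul]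
  -- Membership in the set is convergence of `A · f`.
  have hmem : ∀ (f : ℕ →ᵇ X) (y : Y),
      RieszSeriesConvTo r (fun k => T k (f k)) y ↔ Tendsto (fun n => A n f) atTop (𝓝 y) := by
    intro f y
    unfold RieszSeriesConvTo
    have : (fun n => (∑ k ∈ Finset.range (n + 1), r k)⁻¹ •
        ∑ k ∈ Finset.range (n + 1), r k •
          (∑ j ∈ Finset.range (k + 1), T j (f j))) = fun n => A n f := by
      funext n
      rw [hA]
    rw [this]
  -- The set is closed, hence complete.
  refine IsClosed.isComplete (IsSeqClosed.isClosed ?_)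
  intro g f hg hgf
  have hcau : CauchySeq fun n => A n f := by
    rw [Metric.cauchySeq_iff]
    intro ε hε
    have hδ : 0 < ε / (3 * (C + 1)) := by positivity
    obtain ⟨m, hm⟩ := (Metric.tendsto_atTop.1 hgf (ε / (3 * (C + 1))) hδ).imp
      (fun m h => h m le_rfl)
    obtain ⟨y, hy⟩ := hg m
    have hy' : Tendsto (fun n => A n (g m)) atTop (𝓝 y) := (hmem (g m) y).1 hy
    obtain ⟨N, hN⟩ := Metric.cauchySeq_iff.1 hy'.cauchySeq (ε / 3) (by positivity)
    refine ⟨N, fun p hp q hq => ?_⟩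
    have hout : ∀ i, dist (A i f) (A i (g m)) < ε / 3 := by
      intro i
      rw [dist_eq_norm, ← map_sub]
      calc ‖A i (f - g m)‖ ≤ C * ‖f - g m‖ := hAle _ i
        _ ≤ (C + 1) * ‖f - g m‖ :=
            mul_le_mul_of_nonneg_right (by linarith) (norm_nonneg _)
        _ < (C + 1) * (ε / (3 * (C + 1))) := by
            refine (mul_lt_mul_iff_right₀ (by linarith)).2 ?_
            rw [← dist_eq_norm, dist_comm]
            exact hm
        _ = ε / 3 := by field_simp
    calc dist (A p f) (A q f)
        ≤ dist (A p f) (A p (g m)) + dist (A p (g m)) (A q (g m))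
          + dist (A q (g m)) (A q f) := dist_triangle4 _ _ _ _
      _ < ε / 3 + ε / 3 + ε / 3 := by
          have h1 := hout p
          have h2 := hN p hp q hq
          have h3 : dist (A q (g m)) (A q f) < ε / 3 := by
            rw [dist_comm]; exact hout q
          linarith
      _ = ε := by ring
  obtain ⟨y, hy⟩ := cauchySeq_tendsto_of_complete hcau
  exact ⟨y, (hmem f y).2 hy⟩
end

section
/- Let X and Y be Banach spaces and T_k ∈ B(X,Y). The series ∑_k T_k is c_0(X)-multiplier convergent if and only if every null sequence (x_k) in X belongs to M^∞_R(∑_k T_k), i.e., c_0(X) ⊆ M^∞_R(∑_k T_k). -/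
open Filter Finset Topology

lemma riesz_regular {Y : Type*} [NormedAddCommGroup Y] [NormedSpace ℝ Y]
    (r : ℕ → ℝ) (hr0 : 0 < r 0) (hr : ∀ k, 0 ≤ r k)
    (hR : Tendsto (fun n => ∑ k ∈ Finset.range n, r k) atTop atTop)
    {u : ℕ → Y} {l : Y} (hu : Tendsto u atTop (𝓝 l)) :
    Tendsto (fun n => (∑ k ∈ Finset.range (n + 1), r k)⁻¹ •
      ∑ k ∈ Finset.range (n + 1), r k • u k) atTop (𝓝 l) := by
  set R : ℕ → ℝ := fun n => ∑ k ∈ Finset.range (n + 1), r k with hRdef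
  have hRpos : ∀ n, 0 < R n := by
    intro n
    have : r 0 ≤ R n := by
      apply Finset.single_le_sum (f := r) (fun i _ => hr i)
      simp
    linarith
  have hRtop : Tendsto R atTop atTop := hR.comp (tendsto_add_atTop_nat 1)
  rw [Metric.tendsto_atTop]
  intro ε hε
  obtain ⟨N, hN⟩ := (Metric.tendsto_atTop.1 hu) (ε/4) (by linarith)
  set C : ℝ := ∑ k ∈ Finset.range N, r k * ‖u k - l‖ with hC
  have hC0 : 0 ≤ C := Finset.sum_nonneg fun i _ => mul_nonneg (hr i) (norm_nonneg _)
  obtain ⟨M, hM⟩ := eventually_atTop.1 (hRtop.eventually_ge_atTop (4 * C / ε + 1))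
  refine ⟨max N M, fun n hn => ?_⟩
  have hnN : N ≤ n := le_trans (le_max_left _ _) hn
  have hnM : M ≤ n := le_trans (le_max_right _ _) hn
  have hRn : 4 * C / ε + 1 ≤ R n := hM n hnM
  rw [dist_eq_norm]
  have key : (R n)⁻¹ • (∑ k ∈ Finset.range (n + 1), r k • u k) - l
      = (R n)⁻¹ • (∑ k ∈ Finset.range (n + 1), r k • (u k - l)) := by
    have : (∑ k ∈ Finset.range (n + 1), r k • (u k - l))
        = (∑ k ∈ Finset.range (n + 1), r k • u k) - R n • l := by
      simp [smul_sub, Finset.sum_sub_distrib, hRdef, Finset.sum_smul]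
    rw [this, smul_sub, smul_smul, inv_mul_cancel₀ (hRpos n).ne', one_smul]
  rw [key]
  have hbound : ‖∑ k ∈ Finset.range (n + 1), r k • (u k - l)‖ ≤ C + R n * (ε/4) := by
    calc ‖∑ k ∈ Finset.range (n + 1), r k • (u k - l)‖
        ≤ ∑ k ∈ Finset.range (n + 1), ‖r k • (u k - l)‖ := norm_sum_le _ _
      _ = ∑ k ∈ Finset.range (n + 1), r k * ‖u k - l‖ := by
          refine Finset.sum_congr rfl fun i _ => ?_
          rw [norm_smul, Real.norm_of_nonneg (hr i)]
      _ = (∑ k ∈ Finset.range N, r k * ‖u k - l‖)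
          + ∑ k ∈ Finset.Ico N (n+1), r k * ‖u k - l‖ := by
          rw [← Finset.sum_range_add_sum_Ico _ (by omega : N ≤ n + 1)]
      _ ≤ C + R n * (ε/4) := by
          gcongr
          calc ∑ k ∈ Finset.Ico N (n+1), r k * ‖u k - l‖
              ≤ ∑ k ∈ Finset.Ico N (n+1), r k * (ε/4) := by
                refine Finset.sum_le_sum fun i hi => ?_
                have := hN i (Finset.mem_Ico.1 hi).1
                rw [dist_eq_norm] at this
                exact mul_le_mul_of_nonneg_left this.le (hr i)
            _ = (∑ k ∈ Finset.Ico N (n+1), r k) * (ε/4) := by rw [Finset.sum_mul]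
            _ ≤ R n * (ε/4) := by
                apply mul_le_mul_of_nonneg_right _ (by linarith : (0:ℝ) ≤ ε/4)
                rw [hRdef]
                exact Finset.sum_le_sum_of_subset_of_nonneg
                  (by rw [Finset.range_eq_Ico]; exact Finset.Ico_subset_Ico (Nat.zero_le _) le_rfl) (fun i _ _ => hr i)
  calc ‖(R n)⁻¹ • ∑ k ∈ Finset.range (n + 1), r k • (u k - l)‖
      = (R n)⁻¹ * ‖∑ k ∈ Finset.range (n + 1), r k • (u k - l)‖ := by
        rw [norm_smul, Real.norm_of_nonneg (inv_nonneg.2 (hRpos n).le)]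
    _ ≤ (R n)⁻¹ * (C + R n * (ε/4)) := by
        gcongr
        exact inv_nonneg.2 (hRpos n).le
    _ = (R n)⁻¹ * C + ε/4 := by
        rw [mul_add, ← mul_assoc, inv_mul_cancel₀ (hRpos n).ne', one_mul]
    _ < ε := by
        have h1 : (R n)⁻¹ * C ≤ ε/2 := by
          rcases eq_or_lt_of_le hC0 with h | h
          · rw [← h]; simp; linarith
          · rw [inv_mul_le_iff₀ (hRpos n)]
            have : 4 * C / ε ≤ R n := by linarith
            rw [div_le_iff₀ hε] at this
            nlinarith [hRpos n]
        linarith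


section Backward
variable {X Y : Type*} [NormedAddCommGroup X] [NormedSpace ℝ X]
    [NormedAddCommGroup Y] [NormedSpace ℝ Y] [CompleteSpace Y]

set_option maxHeartbeats 1000000 in
lemma backward_aux (r : ℕ → ℝ) (hr0 : 0 < r 0) (hr : ∀ k, 0 ≤ r k)
    (hR : Tendsto (fun n => ∑ k ∈ Finset.range n, r k) atTop atTop)
    (T : ℕ → X →L[ℝ] Y) (x : ℕ → X) (hx : Tendsto x atTop (𝓝 0))
    (hP : ∀ y : Y, ¬ Tendsto (fun n => ∑ k ∈ Finset.range n, T k (x k)) atTop (𝓝 y)) :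
    ∃ z : ℕ → X, Tendsto z atTop (𝓝 0) ∧
      ∀ y : Y, ¬ Tendsto (fun n => (∑ k ∈ Finset.range (n + 1), r k)⁻¹ •
        ∑ k ∈ Finset.range (n + 1), r k • (∑ j ∈ Finset.range (k + 1), T j (z j)))
        atTop (𝓝 y) := by
  classical
  set R : ℕ → ℝ := fun n => ∑ k ∈ Finset.range (n + 1), r k with hRdef
  have hRpos : ∀ n, 0 < R n := by
    intro n
    have : r 0 ≤ R n := by
      apply Finset.single_le_sum (f := r) (fun i _ => hr i); simp
    linarith
  have hRtop : Tendsto R atTop atTop := hR.comp (tendsto_add_atTop_nat 1)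
  set S : (ℕ → X) → ℕ → Y := fun φ m => ∑ i ∈ Finset.range m, T i (φ i) with hSdef
  set P : ℕ → Y := S x with hPdef
  -- P is not Cauchy
  have hnc : ¬ CauchySeq P := by
    intro h
    obtain ⟨y, hy⟩ := cauchySeq_tendsto_of_complete h
    exact hP y hy
  rw [Metric.cauchySeq_iff] at hnc
  push_neg at hnc
  obtain ⟨ε, hε, hnc⟩ := hnc
  -- blocks far out with mass ≥ ε
  have H : ∀ N : ℕ, ∃ a b : ℕ, N ≤ a ∧ a < b ∧ ε ≤ ‖P b - P a‖ := by
    intro N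
    obtain ⟨m, hm, n, hn, hd⟩ := hnc N
    rcases lt_trichotomy m n with h | h | h
    · exact ⟨m, n, hm, h, by rwa [dist_eq_norm'] at hd⟩
    · subst h; simp at hd; linarith
    · exact ⟨n, m, hn, h, by rwa [dist_eq_norm] at hd⟩
  -- the mean functional
  set mean : (ℕ → X) → ℕ → Y := fun φ t => (R t)⁻¹ •
      ∑ k ∈ Finset.range (t + 1), r k • S φ (k + 1) with hmean
  -- step existence
  have step : ∀ (b : ℕ) (φ : ℕ → X), ∃ t a' b' : ℕ,
      ((∀ k, b ≤ k → φ k = 0) →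
        b ≤ t ∧ t < a' ∧ a' < b' ∧ ε ≤ ‖P b' - P a'‖ ∧
        ‖mean φ t - S φ b‖ ≤ ε / 4) := by
    intro b φ
    by_cases hφ : ∀ k, b ≤ k → φ k = 0
    swap
    · exact ⟨0, 0, 0, fun h => absurd h hφ⟩
    have hSconst : ∀ m, b ≤ m → S φ m = S φ b := by
      intro m hm
      rw [hSdef]
      simp only
      rw [← Finset.sum_range_add_sum_Ico _ hm]
      have : ∑ i ∈ Finset.Ico b m, T i (φ i) = 0 := by
        apply Finset.sum_eq_zero
        intro i hi
        rw [hφ i (Finset.mem_Ico.1 hi).1]; simp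
      rw [this, add_zero]
    set E : Y := ∑ k ∈ Finset.range b, r k • (S φ (k + 1) - S φ b) with hE
    obtain ⟨t, ht⟩ := ((hRtop.eventually_ge_atTop (4 * ‖E‖ / ε + 1)).and
      (eventually_ge_atTop b)).exists
    obtain ⟨a', b', ha', hab, hblock⟩ := H (t + 1)
    refine ⟨t, a', b', fun _ => ⟨ht.2, by omega, hab, hblock, ?_⟩⟩
    have hkey : mean φ t - S φ b = (R t)⁻¹ • E := by
      have h1 : ∑ k ∈ Finset.range (t + 1), r k • (S φ (k + 1) - S φ b)
          = (∑ k ∈ Finset.range (t + 1), r k • S φ (k + 1)) - R t • S φ b := by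
        simp [smul_sub, Finset.sum_sub_distrib, hRdef, Finset.sum_smul]
      have h2 : ∑ k ∈ Finset.range (t + 1), r k • (S φ (k + 1) - S φ b) = E := by
        rw [hE, ← Finset.sum_range_add_sum_Ico _ (by omega : b ≤ t + 1)]
        have : ∑ k ∈ Finset.Ico b (t+1), r k • (S φ (k + 1) - S φ b) = 0 := by
          apply Finset.sum_eq_zero
          intro i hi
          rw [hSconst (i+1) (by have := (Finset.mem_Ico.1 hi).1; omega)]
          simp
        rw [this, add_zero]
      have h3 : (R t)⁻¹ • (∑ k ∈ Finset.range (t + 1), r k • (S φ (k + 1) - S φ b))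
          = mean φ t - S φ b := by
        rw [h1, smul_sub, smul_smul, inv_mul_cancel₀ (hRpos t).ne', one_smul]
      rw [← h3, h2]
    rw [hkey, norm_smul, Real.norm_of_nonneg (inv_nonneg.2 (hRpos t).le)]
    have hRt : 4 * ‖E‖ / ε + 1 ≤ R t := ht.1
    have hE4 : 4 * ‖E‖ / ε ≤ R t - 1 := by linarith
    rw [div_le_iff₀ hε] at hE4
    rw [inv_mul_le_iff₀ (hRpos t)]
    nlinarith [hRpos t, norm_nonneg E]
  choose tc ac bc hstep using step
  -- the recursive construction
  set σ : ℕ → ℕ × (ℕ → X) := fun j => Nat.rec ((0:ℕ), fun _ => (0:X))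
    (fun _ p => (bc p.1 p.2,
      fun k => if ac p.1 p.2 ≤ k ∧ k < bc p.1 p.2 then x k else p.2 k)) j with hσ
  set bb : ℕ → ℕ := fun j => (σ j).1 with hbb
  set φf : ℕ → ℕ → X := fun j => (σ j).2 with hφf
  have hσs : ∀ j, bb (j+1) = bc (bb j) (φf j) ∧
      φf (j+1) = fun k => if ac (bb j) (φf j) ≤ k ∧ k < bc (bb j) (φf j)
        then x k else φf j k := fun j => ⟨rfl, rfl⟩
  -- invariant: φf j vanishes from bb j on
  have I1 : ∀ j, ∀ k, bb j ≤ k → φf j k = 0 := by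
    intro j
    induction j with
    | zero => intro k _; rfl
    | succ j ih =>
      intro k hk
      obtain ⟨h1, h2⟩ := hσs j
      have hst := hstep (bb j) (φf j) ih
      rw [h2]
      simp only
      rw [if_neg (by rw [h1] at hk; omega)]
      exact ih k (by rw [h1] at hk; omega)
  have hst : ∀ j, bb j ≤ tc (bb j) (φf j) ∧ tc (bb j) (φf j) < ac (bb j) (φf j) ∧
      ac (bb j) (φf j) < bb (j+1) ∧ ε ≤ ‖P (bb (j+1)) - P (ac (bb j) (φf j))‖ ∧
      ‖mean (φf j) (tc (bb j) (φf j)) - S (φf j) (bb j)‖ ≤ ε / 4 := by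
    intro j
    have := hstep (bb j) (φf j) (I1 j)
    rwa [← (hσs j).1] at this
  set tt : ℕ → ℕ := fun j => tc (bb j) (φf j) with htt
  set aa : ℕ → ℕ := fun j => ac (bb j) (φf j) with haa
  have hchain : ∀ j, bb j ≤ tt j ∧ tt j < aa j ∧ aa j < bb (j+1) :=
    fun j => ⟨(hst j).1, (hst j).2.1, (hst j).2.2.1⟩
  have hbmono : ∀ j j', j ≤ j' → bb j ≤ bb j' := by
    intro j j' h
    induction j', h using Nat.le_induction with
    | base => exact le_refl _
    | succ j' hj ih =>
      have := hchain j'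
      omega
  have hbge : ∀ j, j ≤ bb j := by
    intro j
    induction j with
    | zero => exact Nat.zero_le _
    | succ j ih => have := hchain j; omega
  have hstab : ∀ j k, k < aa j → φf (j+1) k = φf j k := by
    intro j k hk
    have he : aa j = ac (bb j) (φf j) := rfl
    rw [(hσs j).2]
    simp only
    rw [if_neg (by omega)]
  have hstab2 : ∀ j j', j ≤ j' → ∀ k, k < bb j → φf j' k = φf j k := by
    intro j j' h
    induction j', h using Nat.le_induction with
    | base => intro k _; rfl
    | succ j' hj ih =>
      intro k hk
      rw [hstab j' k (by have := hchain j'; have := hbmono j j' hj; omega)]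
      exact ih k hk
  set z : ℕ → X := fun k => φf (k+1) k with hz
  have hzφ : ∀ j k, k < bb j → z k = φf j k := by
    intro j k hk
    show φf (k+1) k = φf j k
    rcases le_or_gt j (k+1) with h | h
    · exact hstab2 j (k+1) h k hk
    · exact (hstab2 (k+1) j (by omega) k (by have := hbge (k+1); omega)).symm
  -- z is a null sequence
  have hval : ∀ j k, φf j k = x k ∨ φf j k = 0 := by
    intro j
    induction j with
    | zero => intro k; right; rfl
    | succ j ih =>
      intro k
      rw [(hσs j).2]
      simp only
      split
      · left; rfl
      · exact ih k
  have hznull : Tendsto z atTop (𝓝 0) := by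
    refine squeeze_zero_norm (a := fun k => ‖x k‖) (fun k => ?_) (by simpa using hx.norm)
    show ‖φf (k+1) k‖ ≤ ‖x k‖
    rcases hval (k+1) k with h | h
    · rw [h]
    · rw [h]; simp
  refine ⟨z, hznull, ?_⟩
  intro y hy
  -- the Riesz means of the z-series
  set A : ℕ → Y := fun n => (R n)⁻¹ •
      ∑ k ∈ Finset.range (n + 1), r k • S z (k + 1) with hA
  have hyA : Tendsto A atTop (𝓝 y) := hy
  set B : ℕ → Y := fun j => S (φf j) (bb j) with hB
  -- A at time tt j equals mean (φf j) (tt j)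
  have hAz : ∀ j, A (tt j) = mean (φf j) (tt j) := by
    intro j
    rw [hA, hmean]
    simp only
    congr 1
    apply Finset.sum_congr rfl
    intro k hk
    congr 1
    apply Finset.sum_congr rfl
    intro i hi
    have hik : i < aa j := by
      have h1 := Finset.mem_range.1 hk
      have h2 := Finset.mem_range.1 hi
      have := hchain j
      omega
    rw [hzφ (j+1) i (by have := hchain j; omega), hstab j i hik]
  have hAB : ∀ j, ‖A (tt j) - B j‖ ≤ ε / 4 := by
    intro j
    rw [hAz j]
    exact (hst j).2.2.2.2
  have hBdiff : ∀ j, ε ≤ ‖B (j+1) - B j‖ := by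
    intro j
    have hkey : B (j+1) - B j = P (bb (j+1)) - P (aa j) := by
      have h1 : B (j+1) = B j + (P (bb (j+1)) - P (aa j)) := by
        rw [hB, hSdef]
        simp only
        have hsplit : ∑ i ∈ Finset.range (bb (j+1)), T i (φf (j+1) i)
            = (∑ i ∈ Finset.range (aa j), T i (φf (j+1) i))
              + ∑ i ∈ Finset.Ico (aa j) (bb (j+1)), T i (φf (j+1) i) := by
          rw [Finset.sum_range_add_sum_Ico _ (by have := hchain j; omega)]
        rw [hsplit]
        have e1 : ∑ i ∈ Finset.range (aa j), T i (φf (j+1) i)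
            = ∑ i ∈ Finset.range (bb j), T i (φf j i) := by
          rw [← Finset.sum_range_add_sum_Ico (fun i => T i (φf (j+1) i))
            (by have := hchain j; omega : bb j ≤ aa j)]
          have e2 : ∑ i ∈ Finset.Ico (bb j) (aa j), T i (φf (j+1) i) = 0 := by
            apply Finset.sum_eq_zero
            intro i hi
            have hi' := Finset.mem_Ico.1 hi
            rw [hstab j i hi'.2, I1 j i hi'.1]
            simp
          rw [e2, add_zero]
          apply Finset.sum_congr rfl
          intro i hi
          rw [hstab j i (by have := Finset.mem_range.1 hi; have := hchain j; omega)]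
        have e3 : ∑ i ∈ Finset.Ico (aa j) (bb (j+1)), T i (φf (j+1) i)
            = P (bb (j+1)) - P (aa j) := by
          have e4 : ∀ i ∈ Finset.Ico (aa j) (bb (j+1)), T i (φf (j+1) i) = T i (x i) := by
            intro i hi
            have hi' := Finset.mem_Ico.1 hi
            rw [(hσs j).2]
            simp only
            rw [if_pos (by constructor <;> [exact hi'.1; exact hi'.2])]
          rw [Finset.sum_congr rfl e4, hPdef, hSdef]
          simp only
          rw [Finset.sum_Ico_eq_sub _ (by have := hchain j; omega)]
        rw [e1, e3]
      rw [h1]; abel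
    rw [hkey]
    exact (hst j).2.2.2.1
  -- contradiction
  have httop : Tendsto tt atTop atTop :=
    tendsto_atTop_mono (fun j => le_trans (hbge j) (hchain j).1) tendsto_id
  have hlim : Tendsto (fun j => A (tt (j+1)) - A (tt j)) atTop (𝓝 0) := by
    have h2 : Tendsto (fun j => A (tt j)) atTop (𝓝 y) := by
      simpa [Function.comp_def] using hyA.comp httop
    have h1 : Tendsto (fun j => A (tt (j+1))) atTop (𝓝 y) := by
      simpa [Function.comp_def] using h2.comp (tendsto_add_atTop_nat 1)
    simpa using h1.sub h2
  have hlow : ∀ j, ε / 2 ≤ ‖A (tt (j+1)) - A (tt j)‖ := by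
    intro j
    have h1 := hAB j
    have h2 := hAB (j+1)
    have h3 := hBdiff j
    have hdecomp : B (j+1) - B j = (A (tt (j+1)) - A (tt j))
        - (A (tt (j+1)) - B (j+1)) + (A (tt j) - B j) := by abel
    have := norm_add_le ((A (tt (j+1)) - A (tt j)) - (A (tt (j+1)) - B (j+1)))
      (A (tt j) - B j)
    have h4 := norm_sub_le (A (tt (j+1)) - A (tt j)) (A (tt (j+1)) - B (j+1))
    rw [hdecomp] at h3
    linarith
  have h0 : Tendsto (fun j => ‖A (tt (j+1)) - A (tt j)‖) atTop (𝓝 0) := by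
    simpa using hlim.norm
  obtain ⟨j, hj⟩ := (h0.eventually_lt_const (by linarith : (0:ℝ) < ε/2)).exists
  exact absurd (hlow j) (not_le.2 hj)

end Backward

/-- `∑ T k` is `c₀(X)`-multiplier convergent iff `c₀(X) ⊆ M^∞_R(∑ T k)`, i.e.
iff `∑ T k x k` is Riesz convergent for every null sequence `(x k)` in `X`. -/
theorem c0_multiplier_convergent_iff_c0_subset_MR
    {X Y : Type*} [NormedAddCommGroup X] [NormedSpace ℝ X] [CompleteSpace X]
    [NormedAddCommGroup Y] [NormedSpace ℝ Y] [CompleteSpace Y]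
    (r : ℕ → ℝ) (hr0 : 0 < r 0) (hr : ∀ k, 0 ≤ r k)
    (hR : Tendsto (fun n => ∑ k ∈ Finset.range n, r k) atTop atTop)
    (T : ℕ → X →L[ℝ] Y) :
    (∀ x : ℕ → X, Tendsto x atTop (𝓝 0) → ∃ y : Y,
        Tendsto (fun n => ∑ k ∈ Finset.range n, T k (x k)) atTop (𝓝 y)) ↔
    (∀ x : ℕ → X, Tendsto x atTop (𝓝 0) → ∃ y : Y,
        RieszSeriesConvTo r (fun k => T k (x k)) y) := by
  constructor
  · intro h x hx
    obtain ⟨y, hy⟩ := h x hx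
    refine ⟨y, ?_⟩
    unfold RieszSeriesConvTo
    apply riesz_regular r hr0 hr hR
    simpa [Function.comp_def] using hy.comp (tendsto_add_atTop_nat 1)
  · intro h x hx
    by_contra hc
    push_neg at hc
    obtain ⟨z, hznull, hz⟩ := backward_aux r hr0 hr hR T x hx hc
    obtain ⟨y, hy⟩ := h z hznull
    exact hz y hy
end

section
/- Let X and Y be Banach spaces and T_k ∈ B(X,Y). The series ∑_k T_k is c_0(X)-multiplier convergent if and only if the space M^∞_{wR}(∑_k T_k) = { x ∈ ℓ_∞(X) : ∑_k T_k x_k is weakly Riesz convergent in Y }, with the sup norm, is a Banach space. -/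
open Filter Finset Topology BoundedContinuousFunction

set_option linter.unusedSectionVars false

/-- A series `∑ s k` is weakly Riesz convergent to `l` (w.r.t. weights `r`) if
for every continuous linear functional `φ`, the Riesz means of `φ` applied to
the partial sums converge to `φ l`. -/
def WeakRieszSeriesConvTo {Y : Type*} [NormedAddCommGroup Y] [NormedSpace ℝ Y]
    (r : ℕ → ℝ) (s : ℕ → Y) (l : Y) : Prop :=
  ∀ φ : Y →L[ℝ] ℝ,
    Tendsto (fun n => (∑ k ∈ Finset.range (n + 1), r k)⁻¹ *
        ∑ k ∈ Finset.range (n + 1), r k * φ (∑ j ∈ Finset.range (k + 1), s j))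
      atTop (𝓝 (φ l))

section Aux
variable {X Y : Type*} [NormedAddCommGroup X] [NormedSpace ℝ X]
  [NormedAddCommGroup Y] [NormedSpace ℝ Y]

noncomputable def psCLM (T : ℕ → X →L[ℝ] Y) (n : ℕ) : (ℕ →ᵇ X) →L[ℝ] Y :=
  ∑ j ∈ Finset.range n, (T j).comp (evalCLM ℝ j)

lemma psCLM_apply (T : ℕ → X →L[ℝ] Y) (n : ℕ) (f : ℕ →ᵇ X) :
    psCLM T n f = ∑ j ∈ Finset.range n, T j (f j) := by
  simp [psCLM]

noncomputable def rmCLM (r : ℕ → ℝ) (T : ℕ → X →L[ℝ] Y) (N : ℕ) : (ℕ →ᵇ X) →L[ℝ] Y :=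
  (∑ k ∈ Finset.range (N + 1), r k)⁻¹ • ∑ k ∈ Finset.range (N + 1), r k • psCLM T (k + 1)

lemma phi_rmCLM (r : ℕ → ℝ) (T : ℕ → X →L[ℝ] Y) (N : ℕ) (f : ℕ →ᵇ X) (φ : Y →L[ℝ] ℝ) :
    φ (rmCLM r T N f) = (∑ k ∈ Finset.range (N + 1), r k)⁻¹ *
      ∑ k ∈ Finset.range (N + 1), r k * φ (∑ j ∈ Finset.range (k + 1), T j (f j)) := by
  simp [rmCLM, psCLM, map_smul, map_sum, smul_eq_mul]

lemma wR_iff (r : ℕ → ℝ) (T : ℕ → X →L[ℝ] Y) (f : ℕ →ᵇ X) (y : Y) :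
    WeakRieszSeriesConvTo r (fun k => T k (f k)) y ↔
      ∀ φ : Y →L[ℝ] ℝ, Tendsto (fun N => φ (rmCLM r T N f)) atTop (𝓝 (φ y)) := by
  unfold WeakRieszSeriesConvTo
  refine forall_congr' fun φ => ?_
  rw [tendsto_congr fun N => (phi_rmCLM r T N f φ).symm]

/-- Truncation of a sequence to the window `[m, n)`, as a bounded function. -/
noncomputable def truncBCF (x : ℕ → X) (m n : ℕ) : ℕ →ᵇ X :=
  BoundedContinuousFunction.ofNormedAddCommGroupDiscrete
    (fun k => if k ∈ Finset.Ico m n then x k else 0)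
    (∑ k ∈ Finset.Ico m n, ‖x k‖) (by
      intro k
      by_cases h : k ∈ Finset.Ico m n
      · simpa [h] using Finset.single_le_sum (f := fun i => ‖x i‖)
          (fun i _ => norm_nonneg _) h
      · simp [h, Finset.sum_nonneg fun i _ => norm_nonneg (x i)])

@[simp] lemma truncBCF_apply (x : ℕ → X) (m n k : ℕ) :
    truncBCF x m n k = if k ∈ Finset.Ico m n then x k else 0 := rfl

lemma norm_truncBCF_le (x : ℕ → X) (m n : ℕ) {b : ℝ} (hb : 0 ≤ b)
    (h : ∀ k ∈ Finset.Ico m n, ‖x k‖ ≤ b) : ‖truncBCF x m n‖ ≤ b := by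
  rw [BoundedContinuousFunction.norm_le hb]
  intro k
  by_cases hk : k ∈ Finset.Ico m n
  · simpa [hk] using h k hk
  · simpa [hk] using hb

lemma truncBCF_null (x : ℕ → X) (m n : ℕ) :
    Tendsto (fun k => truncBCF x m n k) atTop (𝓝 0) := by
  apply Tendsto.congr' (f₁ := fun _ => (0 : X))
  · filter_upwards [eventually_ge_atTop n] with k hk
    have : k ∉ Finset.Ico m n := by simp [Finset.mem_Ico]; omega
    simp [this]
  · exact tendsto_const_nhds

lemma psCLM_truncBCF (T : ℕ → X →L[ℝ] Y) (x : ℕ → X) (m n p : ℕ) (h : n ≤ p) :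
    psCLM T p (truncBCF x m n) = ∑ j ∈ Finset.Ico m n, T j (x j) := by
  rw [psCLM_apply]
  have hsub : Finset.Ico m n ⊆ Finset.range p := fun j hj => by
    simp only [Finset.mem_Ico] at hj
    exact Finset.mem_range.mpr (lt_of_lt_of_le hj.2 h)
  rw [← Finset.sum_subset hsub (fun j _ hj' => by simp [hj'])]
  exact Finset.sum_congr rfl fun j hj => by simp [hj]

end Aux

section Reg
variable {X Y : Type*} [NormedAddCommGroup X] [NormedSpace ℝ X]
  [NormedAddCommGroup Y] [NormedSpace ℝ Y]

lemma Rpos (r : ℕ → ℝ) (hr0 : 0 < r 0) (hr : ∀ k, 0 ≤ r k) (N : ℕ) :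
    0 < ∑ k ∈ Finset.range (N + 1), r k :=
  lt_of_lt_of_le hr0 (Finset.single_le_sum (fun i _ => hr i)
    (Finset.mem_range.mpr (Nat.succ_pos N)))

/-- Regularity: a finitely supported sequence is weakly Riesz convergent to its total sum. -/
lemma trunc_wR (r : ℕ → ℝ) (hr0 : 0 < r 0) (hr : ∀ k, 0 ≤ r k)
    (hR : Tendsto (fun n => ∑ k ∈ Finset.range n, r k) atTop atTop)
    (T : ℕ → X →L[ℝ] Y) (x : ℕ → X) (m n : ℕ) :
    WeakRieszSeriesConvTo r (fun k => T k (truncBCF x m n k))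
      (∑ j ∈ Finset.Ico m n, T j (x j)) := by
  rw [show (fun k => T k (truncBCF x m n k)) = (fun k => T k ((truncBCF x m n) k)) from rfl]
  rw [wR_iff]
  intro φ
  set s : Y := ∑ j ∈ Finset.Ico m n, T j (x j) with hs
  set d : ℕ → ℝ := fun k => φ (psCLM T (k + 1) (truncBCF x m n)) - φ s with hd
  set D : ℝ := ∑ k ∈ Finset.range (n + 1), r k * d k with hD
  have hdzero : ∀ k, n ≤ k → d k = 0 := by
    intro k hk
    simp only [hd, psCLM_truncBCF T x m n (k+1) (by omega)]
    rw [sub_eq_zero]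
  have heq : ∀ N, n ≤ N → φ (rmCLM r T N (truncBCF x m n)) =
      φ s + (∑ k ∈ Finset.range (N + 1), r k)⁻¹ * D := by
    intro N hN
    rw [phi_rmCLM]
    have h1 : ∀ k, φ (∑ j ∈ Finset.range (k + 1), T j ((truncBCF x m n) j)) =
        φ s + d k := by
      intro k
      simp [hd, psCLM_apply]
    have h2 : (∑ k ∈ Finset.range (N + 1), r k * φ (∑ j ∈ Finset.range (k + 1),
        T j ((truncBCF x m n) j))) = (∑ k ∈ Finset.range (N + 1), r k) * φ s +
        ∑ k ∈ Finset.range (N + 1), r k * d k := by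
      rw [Finset.sum_mul, ← Finset.sum_add_distrib]
      exact Finset.sum_congr rfl fun k _ => by rw [h1 k]; ring
    have h3 : (∑ k ∈ Finset.range (N + 1), r k * d k) = D := by
      rw [hD]
      refine (Finset.sum_subset (Finset.range_subset_range.mpr (by omega)) ?_).symm
      intro k _ hk
      simp only [Finset.mem_range, not_lt] at hk
      rw [hdzero k (by omega)]
      ring
    rw [h2, h3, mul_add, ← mul_assoc, inv_mul_cancel₀ (Rpos r hr0 hr N).ne']
    ring
  have hinv : Tendsto (fun N => (∑ k ∈ Finset.range (N + 1), r k)⁻¹) atTop (𝓝 0) :=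
    (hR.comp (tendsto_add_atTop_nat 1)).inv_tendsto_atTop
  have hlim : Tendsto (fun N => φ s + (∑ k ∈ Finset.range (N + 1), r k)⁻¹ * D)
      atTop (𝓝 (φ s)) := by
    have := (hinv.mul_const D).const_add (φ s)
    simpa using this
  exact hlim.congr' (by filter_upwards [eventually_ge_atTop n] with N hN using (heq N hN).symm)

end Reg

section Fwd
variable {X Y : Type*} [NormedAddCommGroup X] [NormedSpace ℝ X] [CompleteSpace X]
  [NormedAddCommGroup Y] [NormedSpace ℝ Y] [CompleteSpace Y]

lemma forward_dir (r : ℕ → ℝ) (hr0 : 0 < r 0) (hr : ∀ k, 0 ≤ r k)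
    (T : ℕ → X →L[ℝ] Y)
    (H : ∀ x : ℕ → X, Tendsto x atTop (𝓝 0) → ∃ y : Y,
        Tendsto (fun n => ∑ k ∈ Finset.range n, T k (x k)) atTop (𝓝 y)) :
    IsComplete {f : ℕ →ᵇ X | ∃ y : Y, WeakRieszSeriesConvTo r (fun k => T k (f k)) y} := by
  classical
  -- the closed submodule of null sequences
  let Z : Submodule ℝ (ℕ →ᵇ X) :=
    { carrier := {f | Tendsto (fun k => f k) atTop (𝓝 (0 : X))}
      add_mem' := fun {f g} hf hg => by simpa using hf.add hg
      zero_mem' := by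
        simpa using (tendsto_const_nhds : Tendsto (fun _ : ℕ => (0 : X)) atTop (𝓝 0))
      smul_mem' := fun c f hf => by simpa using hf.const_smul c }
  have hZc : IsClosed (Z : Set (ℕ →ᵇ X)) := by
    rw [← isSeqClosed_iff_isClosed]
    intro g a hg ha
    show Tendsto (fun k => a k) atTop (𝓝 (0 : X))
    rw [NormedAddCommGroup.tendsto_nhds_zero]
    intro ε hε
    obtain ⟨i, hi⟩ := Metric.tendsto_atTop.mp ha (ε / 2) (by linarith)
    have h1 := NormedAddCommGroup.tendsto_nhds_zero.mp (hg i) (ε / 2) (by linarith)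
    filter_upwards [h1] with k hk
    have h2 : ‖a k - g i k‖ ≤ ‖a - g i‖ := by
      simpa using BoundedContinuousFunction.norm_coe_le_norm (a - g i) k
    have h3 : ‖a - g i‖ < ε / 2 := by
      rw [norm_sub_rev, ← dist_eq_norm]
      exact hi i le_rfl
    calc ‖a k‖ = ‖(a k - g i k) + g i k‖ := by rw [sub_add_cancel]
      _ ≤ ‖a k - g i k‖ + ‖g i k‖ := norm_add_le _ _
      _ < ε / 2 + ε / 2 := by exact add_lt_add (lt_of_le_of_lt h2 h3) hk
      _ = ε := by ring
  haveI : CompleteSpace Z := hZc.completeSpace_coe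
  -- Banach–Steinhaus on the partial sum operators
  let S : ℕ → Z →L[ℝ] Y := fun n => (psCLM T n).comp Z.subtypeL
  have hpt : ∀ z : Z, ∃ C, ∀ n, ‖S n z‖ ≤ C := by
    intro z
    obtain ⟨y, hy⟩ := H (fun k => (z : ℕ →ᵇ X) k) z.2
    have hb : BddAbove (Set.range fun n => ‖S n z‖) := by
      have : (fun n => ‖S n z‖) = fun n => ‖∑ k ∈ Finset.range n, T k ((z : ℕ →ᵇ X) k)‖ := by
        funext n; simp [S, psCLM_apply]
      rw [this]
      exact hy.norm.bddAbove_range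
    obtain ⟨C, hC⟩ := hb
    exact ⟨C, fun n => hC (Set.mem_range_self n)⟩
  obtain ⟨C, hC⟩ := banach_steinhaus hpt
  have hC0 : 0 ≤ C := le_trans (norm_nonneg (S 0)) (hC 0)
  -- uniform bound on partial sums of bounded sequences
  have hps : ∀ (g : ℕ →ᵇ X) (n : ℕ), ‖psCLM T n g‖ ≤ C * ‖g‖ := by
    intro g n
    have hz : truncBCF (fun k => g k) 0 n ∈ Z := truncBCF_null (fun k => g k) 0 n
    have he : psCLM T n g = S n ⟨truncBCF (fun k => g k) 0 n, hz⟩ := by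
      simp only [S, ContinuousLinearMap.comp_apply, Submodule.subtypeL_apply, psCLM_apply]
      refine Finset.sum_congr rfl fun j hj => ?_
      simp only [Finset.mem_range] at hj
      simp [Finset.mem_Ico, hj]
    rw [he]
    calc ‖S n ⟨truncBCF (fun k => g k) 0 n, hz⟩‖
        ≤ ‖S n‖ * ‖truncBCF (fun k => g k) 0 n‖ := (S n).le_opNorm _
      _ ≤ C * ‖g‖ := by
          refine mul_le_mul (hC n) ?_ (norm_nonneg _) hC0
          exact norm_truncBCF_le _ 0 n (norm_nonneg g)
            (fun k _ => BoundedContinuousFunction.norm_coe_le_norm g k)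
  -- uniform bound on Riesz means
  have hrm : ∀ (g : ℕ →ᵇ X) (N : ℕ), ‖rmCLM r T N g‖ ≤ C * ‖g‖ := by
    intro g N
    have hRp := Rpos r hr0 hr N
    rw [show rmCLM r T N g = (∑ k ∈ Finset.range (N + 1), r k)⁻¹ •
        ∑ k ∈ Finset.range (N + 1), r k • psCLM T (k + 1) g by simp [rmCLM]]
    rw [norm_smul, Real.norm_eq_abs, abs_inv, abs_of_pos hRp]
    have h1 : ‖∑ k ∈ Finset.range (N + 1), r k • psCLM T (k + 1) g‖ ≤
        (∑ k ∈ Finset.range (N + 1), r k) * (C * ‖g‖) := by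
      calc ‖∑ k ∈ Finset.range (N + 1), r k • psCLM T (k + 1) g‖
          ≤ ∑ k ∈ Finset.range (N + 1), ‖r k • psCLM T (k + 1) g‖ := norm_sum_le _ _
        _ ≤ ∑ k ∈ Finset.range (N + 1), r k * (C * ‖g‖) := by
            refine Finset.sum_le_sum fun k _ => ?_
            rw [norm_smul, Real.norm_eq_abs, abs_of_nonneg (hr k)]
            exact mul_le_mul_of_nonneg_left (hps g (k + 1)) (hr k)
        _ = (∑ k ∈ Finset.range (N + 1), r k) * (C * ‖g‖) := by rw [Finset.sum_mul]
    calc (∑ k ∈ Finset.range (N + 1), r k)⁻¹ *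
          ‖∑ k ∈ Finset.range (N + 1), r k • psCLM T (k + 1) g‖
        ≤ (∑ k ∈ Finset.range (N + 1), r k)⁻¹ *
          ((∑ k ∈ Finset.range (N + 1), r k) * (C * ‖g‖)) := by
          exact mul_le_mul_of_nonneg_left h1 (inv_nonneg.mpr hRp.le)
      _ = C * ‖g‖ := by field_simp
  -- sequential closedness of the multiplier set
  refine IsClosed.isComplete ?_
  rw [← isSeqClosed_iff_isClosed]
  intro fi f hfi hf
  choose y hy using hfi
  have hy' : ∀ i (φ : Y →L[ℝ] ℝ),
      Tendsto (fun N => φ (rmCLM r T N (fi i))) atTop (𝓝 (φ (y i))) :=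
    fun i => (wR_iff r T (fi i) (y i)).mp (hy i)
  -- the limits form a Cauchy sequence
  have key : ∀ i j, ‖y i - y j‖ ≤ C * ‖fi i - fi j‖ := by
    intro i j
    refine NormedSpace.norm_le_dual_bound ℝ _ (mul_nonneg hC0 (norm_nonneg _)) fun φ => ?_
    have h1 : Tendsto (fun N => φ (rmCLM r T N (fi i - fi j))) atTop
        (𝓝 (φ (y i) - φ (y j))) := by
      have := (hy' i φ).sub (hy' j φ)
      refine this.congr fun N => ?_
      rw [map_sub, map_sub]
    have h2 : ∀ N, ‖φ (rmCLM r T N (fi i - fi j))‖ ≤ C * ‖fi i - fi j‖ * ‖φ‖ := by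
      intro N
      calc ‖φ (rmCLM r T N (fi i - fi j))‖ ≤ ‖φ‖ * ‖rmCLM r T N (fi i - fi j)‖ :=
            φ.le_opNorm _
        _ ≤ ‖φ‖ * (C * ‖fi i - fi j‖) :=
            mul_le_mul_of_nonneg_left (hrm _ N) (norm_nonneg φ)
        _ = C * ‖fi i - fi j‖ * ‖φ‖ := by ring
    have h3 : ‖φ (y i) - φ (y j)‖ ≤ C * ‖fi i - fi j‖ * ‖φ‖ :=
      le_of_tendsto h1.norm (Eventually.of_forall h2)
    rw [map_sub]
    exact h3
  have hyc : CauchySeq y := by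
    rw [Metric.cauchySeq_iff]
    intro ε hε
    have hfc : CauchySeq fi := hf.cauchySeq
    obtain ⟨N0, hN0⟩ := Metric.cauchySeq_iff.mp hfc (ε / (C + 1)) (by positivity)
    refine ⟨N0, fun i hi j hj => ?_⟩
    have h1 : dist (y i) (y j) ≤ C * ‖fi i - fi j‖ := by
      rw [dist_eq_norm]; exact key i j
    have h2 : ‖fi i - fi j‖ < ε / (C + 1) := by
      rw [← dist_eq_norm]; exact hN0 i hi j hj
    calc dist (y i) (y j) ≤ C * ‖fi i - fi j‖ := h1
      _ ≤ C * (ε / (C + 1)) := by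
          exact mul_le_mul_of_nonneg_left h2.le hC0
      _ < ε := by
          rw [mul_div_assoc']
          rw [div_lt_iff₀ (by linarith)]
          nlinarith
  obtain ⟨y0, hy0⟩ := cauchySeq_tendsto_of_complete hyc
  refine ⟨y0, (wR_iff r T f y0).mpr fun φ => ?_⟩
  rw [Metric.tendsto_atTop]
  intro ε hε
  -- choose a good index i
  have hG : Tendsto (fun i => ‖φ‖ * (C * ‖f - fi i‖) + ‖φ‖ * ‖y i - y0‖) atTop (𝓝 0) := by
    have ha : Tendsto (fun i => ‖f - fi i‖) atTop (𝓝 0) := by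
      have := (tendsto_iff_norm_sub_tendsto_zero.mp hf)
      exact this.congr fun i => by rw [norm_sub_rev]
    have hb : Tendsto (fun i => ‖y i - y0‖) atTop (𝓝 0) :=
      tendsto_iff_norm_sub_tendsto_zero.mp hy0
    have := ((ha.const_mul C).const_mul (‖φ‖)).add (hb.const_mul (‖φ‖))
    simpa using this
  have hev : ∀ᶠ i in atTop,
      ‖φ‖ * (C * ‖f - fi i‖) + ‖φ‖ * ‖y i - y0‖ < ε / 2 := by
    have := hG.eventually (eventually_lt_nhds (show (0:ℝ) < ε / 2 by linarith))
    exact this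
  obtain ⟨i, hi⟩ := hev.exists
  obtain ⟨N0, hN0⟩ := Metric.tendsto_atTop.mp (hy' i φ) (ε / 2) (by linarith)
  refine ⟨N0, fun N hN => ?_⟩
  have e1 : ‖φ (rmCLM r T N f) - φ (rmCLM r T N (fi i))‖ ≤ ‖φ‖ * (C * ‖f - fi i‖) := by
    rw [← map_sub, ← map_sub]
    calc ‖φ (rmCLM r T N (f - fi i))‖ ≤ ‖φ‖ * ‖rmCLM r T N (f - fi i)‖ := φ.le_opNorm _
      _ ≤ ‖φ‖ * (C * ‖f - fi i‖) := mul_le_mul_of_nonneg_left (hrm _ N) (norm_nonneg φ)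
  have e2 : |φ (rmCLM r T N (fi i)) - φ (y i)| < ε / 2 := by
    have := hN0 N hN
    rwa [Real.dist_eq] at this
  have e3 : ‖φ (y i) - φ y0‖ ≤ ‖φ‖ * ‖y i - y0‖ := by
    rw [← map_sub]
    exact φ.le_opNorm _
  rw [Real.dist_eq]
  simp only [Real.norm_eq_abs] at e1 e2 e3
  have tri1 : |φ (rmCLM r T N f) - φ y0| ≤
      |φ (rmCLM r T N f) - φ (y i)| + |φ (y i) - φ y0| := abs_sub_le _ _ _
  have tri2 : |φ (rmCLM r T N f) - φ (y i)| ≤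
      |φ (rmCLM r T N f) - φ (rmCLM r T N (fi i))| +
      |φ (rmCLM r T N (fi i)) - φ (y i)| := abs_sub_le _ _ _
  linarith
end Fwd

section Bwd
variable {X Y : Type*} [NormedAddCommGroup X] [NormedSpace ℝ X] [CompleteSpace X]
  [NormedAddCommGroup Y] [NormedSpace ℝ Y] [CompleteSpace Y]

lemma backward_dir (r : ℕ → ℝ) (hr0 : 0 < r 0) (hr : ∀ k, 0 ≤ r k)
    (hR : Tendsto (fun n => ∑ k ∈ Finset.range n, r k) atTop atTop)
    (T : ℕ → X →L[ℝ] Y)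
    (hcpl : IsComplete {f : ℕ →ᵇ X | ∃ y : Y, WeakRieszSeriesConvTo r (fun k => T k (f k)) y})
    (x : ℕ → X) (hx : Tendsto x atTop (𝓝 0)) :
    ∃ y : Y, Tendsto (fun n => ∑ k ∈ Finset.range n, T k (x k)) atTop (𝓝 y) := by
  classical
  -- the multiplier set as a submodule
  let M : Submodule ℝ (ℕ →ᵇ X) :=
    { carrier := {f : ℕ →ᵇ X | ∃ y : Y, WeakRieszSeriesConvTo r (fun k => T k (f k)) y}
      add_mem' := by
        rintro f g ⟨yf, hf⟩ ⟨yg, hg⟩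
        refine ⟨yf + yg, (wR_iff r T (f + g) (yf + yg)).mpr fun φ => ?_⟩
        have := ((wR_iff r T f yf).mp hf φ).add ((wR_iff r T g yg).mp hg φ)
        simpa [map_add] using this
      zero_mem' := by
        refine ⟨0, (wR_iff r T 0 0).mpr fun φ => ?_⟩
        simpa [map_zero] using
          (tendsto_const_nhds : Tendsto (fun _ : ℕ => (0 : ℝ)) atTop (𝓝 0))
      smul_mem' := by
        rintro c f ⟨yf, hf⟩
        refine ⟨c • yf, (wR_iff r T (c • f) (c • yf)).mpr fun φ => ?_⟩
        have := ((wR_iff r T f yf).mp hf φ).const_mul c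
        simpa [map_smul, smul_eq_mul] using this }
  haveI : CompleteSpace M := completeSpace_coe_iff_isComplete.mpr hcpl
  -- Riesz-mean operators on M
  let σ : ℕ → M →L[ℝ] Y := fun N => (rmCLM r T N).comp M.subtypeL
  have hpt : ∀ g : M, ∃ Cg, ∀ N, ‖σ N g‖ ≤ Cg := by
    intro g
    obtain ⟨y, hy⟩ := g.2
    have hy' := (wR_iff r T (g : ℕ →ᵇ X) y).mp hy
    -- weakly bounded implies bounded, via the double dual
    let u : ℕ → StrongDual ℝ (StrongDual ℝ Y) := fun N =>
      NormedSpace.inclusionInDoubleDualLi ℝ (σ N g)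
    have hptd : ∀ φ : StrongDual ℝ Y, ∃ c, ∀ N, ‖u N φ‖ ≤ c := by
      intro φ
      have hconv : Tendsto (fun N => φ (σ N g)) atTop (𝓝 (φ y)) := hy' φ
      have hb : BddAbove (Set.range fun N => ‖φ (σ N g)‖) := hconv.norm.bddAbove_range
      obtain ⟨c, hc⟩ := hb
      refine ⟨c, fun N => ?_⟩
      have : u N φ = φ (σ N g) := rfl
      rw [this]
      exact hc (Set.mem_range_self N)
    obtain ⟨c, hc⟩ := banach_steinhaus hptd
    refine ⟨c, fun N => ?_⟩
    have : ‖u N‖ = ‖σ N g‖ := (NormedSpace.inclusionInDoubleDualLi ℝ).norm_map _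
    rw [← this]
    exact hc N
  obtain ⟨C, hC⟩ := banach_steinhaus hpt
  have hC0 : 0 ≤ C := le_trans (norm_nonneg (σ 0)) (hC 0)
  -- bound on sums over windows
  have key : ∀ m n : ℕ, ‖∑ j ∈ Finset.Ico m n, T j (x j)‖ ≤ C * ‖truncBCF x m n‖ := by
    intro m n
    have hwR := trunc_wR r hr0 hr hR T x m n
    have hmem : truncBCF x m n ∈ M := ⟨_, hwR⟩
    set g : M := (⟨truncBCF x m n, hmem⟩ : M) with hg
    refine NormedSpace.norm_le_dual_bound ℝ _ (mul_nonneg hC0 (norm_nonneg _)) fun φ => ?_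
    have hconv : Tendsto (fun N => φ (σ N g)) atTop
        (𝓝 (φ (∑ j ∈ Finset.Ico m n, T j (x j)))) :=
      (wR_iff r T (truncBCF x m n) _).mp hwR φ
    refine le_of_tendsto hconv.norm (Eventually.of_forall fun N => ?_)
    calc ‖φ (σ N g)‖ ≤ ‖φ‖ * ‖σ N g‖ := φ.le_opNorm _
      _ ≤ ‖φ‖ * (‖σ N‖ * ‖g‖) := mul_le_mul_of_nonneg_left ((σ N).le_opNorm g) (norm_nonneg φ)
      _ ≤ ‖φ‖ * (C * ‖truncBCF x m n‖) := by
          refine mul_le_mul_of_nonneg_left ?_ (norm_nonneg φ)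
          exact mul_le_mul_of_nonneg_right (hC N) (norm_nonneg g)
      _ = C * ‖truncBCF x m n‖ * ‖φ‖ := by ring
  -- partial sums are Cauchy
  have hcs : CauchySeq (fun n => ∑ k ∈ Finset.range n, T k (x k)) := by
    rw [Metric.cauchySeq_iff']
    intro ε hε
    have hδ : (0 : ℝ) < ε / (C + 1) := by positivity
    obtain ⟨N, hN⟩ := (NormedAddCommGroup.tendsto_nhds_zero.mp hx (ε / (C + 1)) hδ).exists_forall_of_atTop
    refine ⟨N, fun n hn => ?_⟩
    rw [dist_eq_norm, ← Finset.sum_Ico_eq_sub _ hn]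
    calc ‖∑ j ∈ Finset.Ico N n, T j (x j)‖ ≤ C * ‖truncBCF x N n‖ := key N n
      _ ≤ C * (ε / (C + 1)) := by
          refine mul_le_mul_of_nonneg_left ?_ hC0
          exact norm_truncBCF_le x N n hδ.le fun k hk => by
            have := hN k (Finset.mem_Ico.mp hk).1
            exact this.le
      _ < ε := by
          rw [mul_div_assoc', div_lt_iff₀ (by linarith)]
          nlinarith
  exact cauchySeq_tendsto_of_complete hcs

end Bwd


/-- `∑ T k` is `c₀(X)`-multiplier convergent iff the weak Riesz multiplier space
`M^∞_{wR}(∑ T k)` (as a subset of the bounded `X`-valued sequences with the sup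
norm) is complete, i.e. a Banach space. -/
theorem c0_multiplier_convergent_iff_MwR_complete
    {X Y : Type*} [NormedAddCommGroup X] [NormedSpace ℝ X] [CompleteSpace X]
    [NormedAddCommGroup Y] [NormedSpace ℝ Y] [CompleteSpace Y]
    (r : ℕ → ℝ) (hr0 : 0 < r 0) (hr : ∀ k, 0 ≤ r k)
    (hR : Tendsto (fun n => ∑ k ∈ Finset.range n, r k) atTop atTop)
    (T : ℕ → X →L[ℝ] Y) :
    (∀ x : ℕ → X, Tendsto x atTop (𝓝 0) → ∃ y : Y,
        Tendsto (fun n => ∑ k ∈ Finset.range n, T k (x k)) atTop (𝓝 y)) ↔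
    IsComplete {f : ℕ →ᵇ X | ∃ y : Y, WeakRieszSeriesConvTo r (fun k => T k (f k)) y} := by
  constructor
  · intro H
    exact forward_dir r hr0 hr T H
  · intro h x hx
    exact backward_dir r hr0 hr hR T h x hx
end

section
/- Let X and Y be Banach spaces and T_k ∈ B(X,Y). If ∑_k T_k is c_0(X)-multiplier convergent, then every sequence x = (x_k) in M^∞_R(∑_k T_k) also lies in M^∞_w(∑_k T_k), i.e., M^∞_R(∑_k T_k) ⊆ M^∞_w(∑_k T_k); that is, if ∑_k T_k x_k is Riesz convergent for a bounded sequence (x_k), then ∑_k T_k x_k is weakly convergent. -/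
open Filter Finset Topology

private lemma aux_sqrt_atTop : Tendsto Real.sqrt atTop atTop := by
  refine tendsto_atTop_atTop.2 fun b => ⟨b ^ 2, fun a ha => ?_⟩
  calc b ≤ |b| := le_abs_self b
    _ = Real.sqrt (b ^ 2) := (Real.sqrt_sq_eq_abs b).symm
    _ ≤ Real.sqrt a := Real.sqrt_le_sqrt ha

/-- Regularity of Riesz means (real-valued): the weighted Riesz means of a convergent
sequence converge to the same limit. -/
private lemma aux_riesz_regular {r : ℕ → ℝ} (hr0 : 0 < r 0) (hr : ∀ k, 0 ≤ r k)
    (hR : Tendsto (fun n => ∑ k ∈ Finset.range n, r k) atTop atTop)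
    {c : ℕ → ℝ} {l : ℝ} (hc : Tendsto c atTop (𝓝 l)) :
    Tendsto (fun n => (∑ k ∈ Finset.range (n + 1), r k)⁻¹ *
      ∑ k ∈ Finset.range (n + 1), r k * c k) atTop (𝓝 l) := by
  have hf : (fun k => r k * (c k - l)) =o[atTop] r := by
    rw [Asymptotics.isLittleO_iff]
    intro ε hε
    filter_upwards [NormedAddCommGroup.tendsto_nhds_zero.mp
      (tendsto_sub_nhds_zero_iff.2 hc) ε hε] with k hk
    have h1 : ‖r k * (c k - l)‖ = r k * ‖c k - l‖ := by
      rw [norm_mul, Real.norm_of_nonneg (hr k)]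
    have h2 : ‖(r k : ℝ)‖ = r k := Real.norm_of_nonneg (hr k)
    rw [h1, h2]
    nlinarith [hk.le, hr k, norm_nonneg (c k - l)]
  have hsum := hf.sum_range hr hR
  have h2 : (fun n => ∑ k ∈ Finset.range (n + 1), r k * (c k - l)) =o[atTop]
      (fun n => ∑ k ∈ Finset.range (n + 1), r k) :=
    hsum.comp_tendsto (tendsto_add_atTop_nat 1)
  have h3 := h2.tendsto_div_nhds_zero
  have key : ∀ n, (∑ k ∈ Finset.range (n + 1), r k)⁻¹ * ∑ k ∈ Finset.range (n + 1), r k * c k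
      = (∑ k ∈ Finset.range (n + 1), r k * (c k - l)) / (∑ k ∈ Finset.range (n + 1), r k) + l := by
    intro n
    have hpos : 0 < ∑ k ∈ Finset.range (n + 1), r k :=
      lt_of_lt_of_le hr0 (Finset.single_le_sum (fun i _ => hr i)
        (Finset.mem_range.2 (Nat.succ_pos n)))
    have hexp : ∑ k ∈ Finset.range (n + 1), r k * (c k - l)
        = (∑ k ∈ Finset.range (n + 1), r k * c k) - (∑ k ∈ Finset.range (n + 1), r k) * l := by
      rw [Finset.sum_mul, ← Finset.sum_sub_distrib]
      exact Finset.sum_congr rfl fun k _ => by ring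
    rw [hexp]
    field_simp
    ring
  have := h3.add_const l
  rw [zero_add] at this
  exact this.congr fun n => (key n).symm

/-- If `∑ T k` is `c₀(X)`-multiplier convergent, then `M^∞_R(∑ T k) ⊆ M^∞_w(∑ T k)`:
for every bounded sequence `(x k)` for which `∑ T k x k` is Riesz convergent,
the series `∑ T k x k` is weakly convergent. -/
theorem MR_subset_Mw_of_c0_multiplier_convergent
    {X Y : Type*} [NormedAddCommGroup X] [NormedSpace ℝ X] [CompleteSpace X]
    [NormedAddCommGroup Y] [NormedSpace ℝ Y] [CompleteSpace Y]
    (r : ℕ → ℝ) (hr0 : 0 < r 0) (hr : ∀ k, 0 ≤ r k)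
    (hR : Tendsto (fun n => ∑ k ∈ Finset.range n, r k) atTop atTop)
    (T : ℕ → X →L[ℝ] Y)
    (hc0 : ∀ x : ℕ → X, Tendsto x atTop (𝓝 0) → ∃ y : Y,
        Tendsto (fun n => ∑ k ∈ Finset.range n, T k (x k)) atTop (𝓝 y)) :
    ∀ x : ℕ → X, (∃ C : ℝ, ∀ k, ‖x k‖ ≤ C) →
      (∃ y : Y, RieszSeriesConvTo r (fun k => T k (x k)) y) →
      ∃ y0 : Y, ∀ φ : Y →L[ℝ] ℝ,
        Tendsto (fun n => φ (∑ k ∈ Finset.range n, T k (x k))) atTop (𝓝 (φ y0)) := by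
  rintro x ⟨C, hC⟩ ⟨y, hy⟩
  refine ⟨y, fun φ => ?_⟩
  -- Step 1 : the scalar series `∑ φ (T k (x k))` is absolutely convergent.
  set a : ℕ → ℝ := fun k => |φ (T k (x k))| with ha_def
  have ha_nonneg : ∀ k, 0 ≤ a k := fun k => abs_nonneg _
  have hsum_a : Summable a := by
    by_contra hns
    have hA : Tendsto (fun n => ∑ k ∈ Finset.range n, a k) atTop atTop :=
      (not_summable_iff_tendsto_nat_atTop_of_nonneg ha_nonneg).1 hns
    -- the partial sums, shifted by 1
    set B : ℕ → ℝ := fun n => 1 + ∑ k ∈ Finset.range n, a k with hB_def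
    have hB1 : ∀ n, 1 ≤ B n := fun n =>
      le_add_of_nonneg_right (Finset.sum_nonneg fun k _ => ha_nonneg k)
    have hB0 : ∀ n, 0 ≤ B n := fun n => le_trans zero_le_one (hB1 n)
    have hBmono : ∀ n, B n ≤ B (n + 1) := fun n => by
      simp only [hB_def, Finset.sum_range_succ]
      nlinarith [ha_nonneg n]
    have hBstep : ∀ n, B (n + 1) - B n = a n := fun n => by
      simp [hB_def, Finset.sum_range_succ]
    have hBtop : Tendsto B atTop atTop := by
      simpa [hB_def] using tendsto_atTop_add_const_left atTop 1 hA
    -- signs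
    set g : ℕ → ℝ := fun k => if φ (T k (x k)) < 0 then (-1 : ℝ) else 1 with hg_def
    have hg_abs : ∀ k, |g k| = 1 := fun k => by
      by_cases h : φ (T k (x k)) < 0 <;> simp [hg_def, h]
    have hg_mul : ∀ k, g k * φ (T k (x k)) = a k := fun k => by
      by_cases h : φ (T k (x k)) < 0
      · simp [hg_def, h, ha_def, abs_of_neg h]
      · simp [hg_def, h, ha_def, abs_of_nonneg (not_lt.mp h)]
    -- the null multiplier sequence
    set z : ℕ → X := fun k => ((Real.sqrt (B (k + 1)))⁻¹ * g k) • x k with hz_def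
    have hsqrt_pos : ∀ n, 0 < Real.sqrt (B n) := fun n =>
      Real.sqrt_pos.2 (lt_of_lt_of_le zero_lt_one (hB1 n))
    have hz0 : Tendsto z atTop (𝓝 0) := by
      have hnorm : ∀ k, ‖z k‖ ≤ C * (Real.sqrt (B (k + 1)))⁻¹ := by
        intro k
        have : ‖z k‖ = (Real.sqrt (B (k + 1)))⁻¹ * ‖x k‖ := by
          rw [hz_def]
          simp only [norm_smul, Real.norm_eq_abs, abs_mul, hg_abs k, mul_one,
            abs_of_nonneg (inv_nonneg.2 (Real.sqrt_nonneg _))]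
        rw [this, mul_comm]
        exact mul_le_mul_of_nonneg_right (hC k) (inv_nonneg.2 (Real.sqrt_nonneg _))
      have hlim : Tendsto (fun k => C * (Real.sqrt (B (k + 1)))⁻¹) atTop (𝓝 0) := by
        have h1 : Tendsto (fun k => Real.sqrt (B (k + 1))) atTop atTop :=
          (aux_sqrt_atTop.comp hBtop).comp (tendsto_add_atTop_nat 1)
        simpa using (h1.inv_tendsto_atTop).const_mul C
      exact squeeze_zero_norm hnorm hlim
    obtain ⟨w, hw⟩ := hc0 z hz0
    have hφw : Tendsto (fun n => ∑ k ∈ Finset.range n, φ (T k (z k))) atTop (𝓝 (φ w)) := by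
      have := (φ.continuous.tendsto w).comp hw
      exact this.congr fun n => (map_sum φ _ _)
    -- each term equals `a k / √(B (k+1))`, which dominates `√(B (k+1)) - √(B k)`
    have hterm : ∀ k, φ (T k (z k)) = a k / Real.sqrt (B (k + 1)) := by
      intro k
      rw [hz_def]
      simp only [map_smul, smul_eq_mul]
      rw [mul_assoc, hg_mul k, div_eq_inv_mul]
    have hineq : ∀ k, Real.sqrt (B (k + 1)) - Real.sqrt (B k) ≤ φ (T k (z k)) := by
      intro k
      rw [hterm k, le_div_iff₀ (hsqrt_pos (k + 1))]
      have e1 : Real.sqrt (B (k + 1)) * Real.sqrt (B (k + 1)) = B (k + 1) :=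
        Real.mul_self_sqrt (hB0 (k + 1))
      have e2 : Real.sqrt (B k) * Real.sqrt (B k) = B k := Real.mul_self_sqrt (hB0 k)
      have e3 : Real.sqrt (B k) ≤ Real.sqrt (B (k + 1)) := Real.sqrt_le_sqrt (hBmono k)
      have e4 := hBstep k
      nlinarith [Real.sqrt_nonneg (B k)]
    have hlower : ∀ n, Real.sqrt (B n) - 1 ≤ ∑ k ∈ Finset.range n, φ (T k (z k)) := by
      intro n
      have htel : ∑ k ∈ Finset.range n, (Real.sqrt (B (k + 1)) - Real.sqrt (B k))
          = Real.sqrt (B n) - Real.sqrt (B 0) :=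
        Finset.sum_range_sub (fun k => Real.sqrt (B k)) n
      have hB0' : B 0 = 1 := by simp [hB_def]
      calc Real.sqrt (B n) - 1 = ∑ k ∈ Finset.range n,
            (Real.sqrt (B (k + 1)) - Real.sqrt (B k)) := by
            rw [htel, hB0', Real.sqrt_one]
        _ ≤ ∑ k ∈ Finset.range n, φ (T k (z k)) :=
            Finset.sum_le_sum fun k _ => hineq k
    have hdiv : Tendsto (fun n => ∑ k ∈ Finset.range n, φ (T k (z k))) atTop atTop := by
      refine tendsto_atTop_mono hlower ?_
      have := aux_sqrt_atTop.comp hBtop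
      simpa [sub_eq_add_neg] using tendsto_atTop_add_const_right atTop (-1 : ℝ) this
    exact not_tendsto_atTop_of_tendsto_nhds hφw hdiv
  -- Step 2 : hence the partial sums of `∑ φ (T k (x k))` converge to some `cc`.
  have hsum : Summable fun k => φ (T k (x k)) := hsum_a.of_abs
  set cc : ℝ := ∑' k, φ (T k (x k)) with hcc_def
  have hpartial : Tendsto (fun n => ∑ k ∈ Finset.range n, φ (T k (x k))) atTop (𝓝 cc) :=
    hsum.hasSum.tendsto_sum_nat
  -- Step 3 : identify `cc = φ y` using regularity of Riesz means.
  set c : ℕ → ℝ := fun k => ∑ j ∈ Finset.range (k + 1), φ (T j (x j)) with hc_def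
  have hc : Tendsto c atTop (𝓝 cc) := hpartial.comp (tendsto_add_atTop_nat 1)
  have hreg := aux_riesz_regular hr0 hr hR hc
  have hφy : Tendsto (fun n => (∑ k ∈ Finset.range (n + 1), r k)⁻¹ *
      ∑ k ∈ Finset.range (n + 1), r k * c k) atTop (𝓝 (φ y)) := by
    have h := (φ.continuous.tendsto y).comp hy
    refine h.congr fun n => ?_
    simp only [Function.comp_apply, map_smul, smul_eq_mul, map_sum]
    rfl
  have hcy : cc = φ y := tendsto_nhds_unique hreg hφy
  rw [← hcy]
  exact hpartial.congr fun n => (map_sum φ _ _).symm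
end

section
/- Let X and Y be normed spaces, T_k ∈ B(X,Y), and suppose the series ∑_k T_k is c_0(X)-multiplier Cauchy. Then the set { ‖∑_{k=1}^n T_k x_k‖ : n ∈ ℕ, ‖x_k‖ ≤ 1 for all k ≤ n } is bounded; i.e., there exists H > 0 such that ‖∑_{k=1}^n T_k x_k‖ ≤ H for all n and all x_1, ..., x_n in the closed unit ball of X. -/
open Filter Finset Topology

/-- If `∑ T k` is `c₀(X)`-multiplier Cauchy, then the partial sums
`∑_{k<n} T k x k` with `x k` in the closed unit ball are uniformly bounded. -/
theorem c0_multiplier_cauchy_uniform_bound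
    {X Y : Type*} [NormedAddCommGroup X] [NormedSpace ℝ X]
    [NormedAddCommGroup Y] [NormedSpace ℝ Y]
    (T : ℕ → X →L[ℝ] Y)
    (hC : ∀ x : ℕ → X, Tendsto x atTop (𝓝 0) →
        CauchySeq (fun n => ∑ k ∈ Finset.range n, T k (x k))) :
    ∃ H > 0, ∀ n : ℕ, ∀ x : ℕ → X, (∀ k < n, ‖x k‖ ≤ 1) →
      ‖∑ k ∈ Finset.range n, T k (x k)‖ ≤ H := by
  by_contra hcon
  push_neg at hcon
  -- hcon : ∀ H > 0, ∃ n x, (∀ k < n, ‖x k‖ ≤ 1) ∧ H < ‖∑ ...‖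
  -- Step 1: blocks starting at any position can be made large.
  have key : ∀ (m : ℕ) (c : ℝ), ∃ N, m < N ∧ ∃ x : ℕ → X,
      (∀ k, ‖x k‖ ≤ 1) ∧ c < ‖∑ k ∈ Finset.Ico m N, T k (x k)‖ := by
    intro m c
    set C : ℝ := ∑ k ∈ Finset.range m, ‖T k‖ with hCdef
    have hC0 : 0 ≤ C := Finset.sum_nonneg fun k _ => norm_nonneg _
    have hH : (0:ℝ) < max c 0 + C + 1 := by positivity
    obtain ⟨N, x, hx1, hx2⟩ := hcon _ hH
    -- partial sum over range m is at most C
    have hbound : ∀ p ≤ N, ‖∑ k ∈ Finset.range p, T k (x k)‖ ≤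
        ∑ k ∈ Finset.range p, ‖T k‖ := by
      intro p hp
      refine (norm_sum_le _ _).trans (Finset.sum_le_sum fun k hk => ?_)
      have hk' : k < N := lt_of_lt_of_le (Finset.mem_range.mp hk) hp
      calc ‖T k (x k)‖ ≤ ‖T k‖ * ‖x k‖ := (T k).le_opNorm _
        _ ≤ ‖T k‖ * 1 := by
            exact mul_le_mul_of_nonneg_left (hx1 k hk') (norm_nonneg _)
        _ = ‖T k‖ := mul_one _
    have hmN : m < N := by
      by_contra hmN
      push_neg at hmN
      have h1 : ‖∑ k ∈ Finset.range N, T k (x k)‖ ≤ C := by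
        refine (hbound N le_rfl).trans ?_
        exact Finset.sum_le_sum_of_subset_of_nonneg
          (Finset.range_subset_range.mpr hmN) (fun k _ _ => norm_nonneg _)
      have : max c 0 + C + 1 < C := lt_of_lt_of_le hx2 h1
      nlinarith [le_max_right c 0]
    refine ⟨N, hmN, fun k => if k < N then x k else 0, fun k => ?_, ?_⟩
    · by_cases h : k < N
      · simpa [h] using hx1 k h
      · simp [h]
    · have hIco : ∑ k ∈ Finset.Ico m N, T k ((fun k => if k < N then x k else 0) k)
          = ∑ k ∈ Finset.Ico m N, T k (x k) := by
        refine Finset.sum_congr rfl fun k hk => ?_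
        have : k < N := (Finset.mem_Ico.mp hk).2
        simp [this]
      rw [hIco, Finset.sum_Ico_eq_sub _ hmN.le]
      have h2 : ‖∑ k ∈ Finset.range m, T k (x k)‖ ≤ C :=
        hbound m hmN.le
      have h3 := norm_sub_norm_le (∑ k ∈ Finset.range N, T k (x k))
        (∑ k ∈ Finset.range m, T k (x k))
      have := le_max_left c 0
      linarith
  choose n hn x hx1 hx2 using key
  -- Step 2: recursive block positions
  set M : ℕ → ℕ := fun j => Nat.rec 0 (fun i mi => n mi (((i:ℝ)+1)^2)) j with hMdef
  have hMlt : ∀ j, M j < M (j+1) := fun j => hn _ _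
  have hmono : StrictMono M := strictMono_nat_of_lt_succ hMlt
  set xs : ℕ → ℕ → X := fun j => x (M j) (((j:ℝ)+1)^2) with hxsdef
  have hxs1 : ∀ j k, ‖xs j k‖ ≤ 1 := fun j k => hx1 _ _ k
  have hxs2 : ∀ j : ℕ, ((j:ℝ)+1)^2 < ‖∑ k ∈ Finset.Ico (M j) (M (j+1)), T k (xs j k)‖ :=
    fun j => hx2 (M j) (((j:ℝ)+1)^2)
  -- index function J
  have hex : ∀ k, ∃ j, k < M (j+1) := by
    intro k
    exact ⟨k, lt_of_lt_of_le (Nat.lt_succ_self k) (hmono.le_apply)⟩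
  set J : ℕ → ℕ := fun k => Nat.find (hex k) with hJdef
  have hJ1 : ∀ k, k < M (J k + 1) := fun k => Nat.find_spec (hex k)
  have hJeq : ∀ j k, M j ≤ k → k < M (j+1) → J k = j := by
    intro j k h1 h2
    refine le_antisymm (Nat.find_le h2) ?_
    by_contra hlt
    push_neg at hlt
    have hmm : M (J k + 1) ≤ M j := hmono.monotone (Nat.succ_le_of_lt hlt)
    have hkk := hJ1 k
    omega
  have hJge : ∀ j k, M (j+1) ≤ k → j < J k := by
    intro j k h
    rw [hJdef, Nat.lt_find_iff]
    intro i hi hik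
    have hmm : M (i+1) ≤ M (j+1) := hmono.monotone (Nat.succ_le_succ hi)
    omega
  -- the null sequence
  set z : ℕ → X := fun k => ((J k : ℝ)+1)⁻¹ • xs (J k) k with hzdef
  have hz0 : Tendsto z atTop (𝓝 0) := by
    have hJtop : Tendsto J atTop atTop := by
      refine tendsto_atTop_atTop.mpr fun b => ⟨M (b+1), fun k hk => (hJge b k hk).le⟩
    have hnorm : ∀ k, ‖z k‖ ≤ ((J k : ℝ)+1)⁻¹ := by
      intro k
      rw [hzdef]
      simp only [norm_smul, norm_inv, Real.norm_eq_abs]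
      have h1 : (0:ℝ) < (J k : ℝ) + 1 := by positivity
      rw [abs_of_pos h1]
      calc ((J k:ℝ)+1)⁻¹ * ‖xs (J k) k‖ ≤ ((J k:ℝ)+1)⁻¹ * 1 :=
            mul_le_mul_of_nonneg_left (hxs1 _ _) (by positivity)
        _ = ((J k:ℝ)+1)⁻¹ := mul_one _
    refine squeeze_zero_norm hnorm ?_
    have : Tendsto (fun k => ((J k : ℝ) + 1)) atTop atTop :=
      tendsto_atTop_add_const_right _ 1 (tendsto_natCast_atTop_atTop.comp hJtop)
    exact tendsto_inv_atTop_zero.comp this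
  -- Step 3: contradiction with Cauchy
  have hcauchy := hC z hz0
  rw [Metric.cauchySeq_iff] at hcauchy
  obtain ⟨Nb, hNb⟩ := hcauchy 1 one_pos
  set j := Nb with hj
  have hMj : Nb ≤ M j := hmono.le_apply
  have hMj1 : Nb ≤ M (j+1) := hMj.trans (hMlt j).le
  have hd := hNb (M (j+1)) hMj1 (M j) hMj
  rw [dist_eq_norm, ← Finset.sum_Ico_eq_sub _ (hMlt j).le] at hd
  -- the block sum equals the scaled block
  have hblock : ∑ k ∈ Finset.Ico (M j) (M (j+1)), T k (z k)
      = ((j:ℝ)+1)⁻¹ • ∑ k ∈ Finset.Ico (M j) (M (j+1)), T k (xs j k) := by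
    rw [Finset.smul_sum]
    refine Finset.sum_congr rfl fun k hk => ?_
    obtain ⟨h1, h2⟩ := Finset.mem_Ico.mp hk
    have hJk : J k = j := hJeq j k h1 h2
    rw [hzdef]
    simp only [hJk, map_smul]
  rw [hblock] at hd
  have hpos : (0:ℝ) < (j:ℝ)+1 := by positivity
  have hnormsmul : ‖((j:ℝ)+1)⁻¹ • ∑ k ∈ Finset.Ico (M j) (M (j+1)), T k (xs j k)‖
      = ((j:ℝ)+1)⁻¹ * ‖∑ k ∈ Finset.Ico (M j) (M (j+1)), T k (xs j k)‖ := by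
    rw [norm_smul, norm_inv, Real.norm_eq_abs, abs_of_pos hpos]
  rw [hnormsmul] at hd
  have hbig := hxs2 j
  have h4 : ((j:ℝ)+1)^2 * ((j:ℝ)+1)⁻¹ <
      ((j:ℝ)+1)⁻¹ * ‖∑ k ∈ Finset.Ico (M j) (M (j+1)), T k (xs j k)‖ := by
    rw [mul_comm]
    exact mul_lt_mul_of_pos_left hbig (by positivity)
  have h5 : ((j:ℝ)+1)^2 * ((j:ℝ)+1)⁻¹ = (j:ℝ)+1 := by
    field_simp
  rw [h5] at h4
  have h6 : (1:ℝ) ≤ (j:ℝ)+1 := le_add_of_nonneg_left (Nat.cast_nonneg j)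
  linarith
end

section
/- Let X be a normed space, Y a Banach space, and T_k ∈ B(X,Y). If ∑_k T_k is ℓ_∞(X)-multiplier convergent, then the series ∑_k T_k x_k converges uniformly in Y over all sequences (x_k) with ‖x_k‖ ≤ 1 for all k; i.e., sup{‖∑_{k=n+1}^∞ T_k x_k‖ : ‖x_k‖ ≤ 1 for all k} → 0 as n → ∞. -/
open Filter Finset Topology

/-- If `∑ T k` is `ℓ∞(X)`-multiplier convergent, then the series `∑ T k x k`
converge uniformly over all sequences `(x k)` in the closed unit ball: the
tails are uniformly small. -/
theorem linfty_multiplier_convergent_uniform_convergence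
    {X Y : Type*} [NormedAddCommGroup X] [NormedSpace ℝ X]
    [NormedAddCommGroup Y] [NormedSpace ℝ Y] [CompleteSpace Y]
    (T : ℕ → X →L[ℝ] Y)
    (h : ∀ x : ℕ → X, (∃ C : ℝ, ∀ k, ‖x k‖ ≤ C) → ∃ y : Y,
        Tendsto (fun n => ∑ k ∈ Finset.range n, T k (x k)) atTop (𝓝 y)) :
    ∀ ε > 0, ∃ N : ℕ, ∀ x : ℕ → X, (∀ k, ‖x k‖ ≤ 1) → ∀ y : Y,
      Tendsto (fun n => ∑ k ∈ Finset.range n, T k (x k)) atTop (𝓝 y) →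
      ∀ n ≥ N, ‖y - ∑ k ∈ Finset.range n, T k (x k)‖ ≤ ε := by
  classical
  by_contra hc
  push_neg at hc
  obtain ⟨ε, hε, hc⟩ := hc
  -- From the failure, extract for every N a "hump": a unit sequence and an
  -- interval [n, m) with n ≥ N whose block sum has norm > ε/2.
  have H : ∀ N : ℕ, ∃ x : ℕ → X, (∀ k, ‖x k‖ ≤ 1) ∧ ∃ n m : ℕ, N ≤ n ∧ n < m ∧
      ε / 2 < ‖∑ k ∈ Finset.Ico n m, T k (x k)‖ := by
    intro N
    obtain ⟨x, hx, y, hy, n, hn, hlt⟩ := hc N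
    refine ⟨x, hx, n, ?_⟩
    have h0 : Tendsto (fun m => ‖y - ∑ k ∈ Finset.range m, T k (x k)‖) atTop (𝓝 0) := by
      have := (tendsto_const_nhds (x := y) (f := atTop)).sub hy
      simpa using this.norm
    have hev : ∀ᶠ m in atTop, ‖y - ∑ k ∈ Finset.range m, T k (x k)‖ < ε / 2 :=
      h0.eventually_lt_const (by linarith)
    obtain ⟨M, hM⟩ := hev.exists_forall_of_atTop
    refine ⟨max M (n + 1), hn, lt_of_lt_of_le (Nat.lt_succ_self n) (le_max_right _ _), ?_⟩
    set m := max M (n + 1)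
    have hnm : n ≤ m := le_trans (Nat.le_succ n) (le_max_right _ _)
    have hMm : M ≤ m := le_max_left _ _
    have hsub : ∑ k ∈ Finset.Ico n m, T k (x k)
        = (∑ k ∈ Finset.range m, T k (x k)) - ∑ k ∈ Finset.range n, T k (x k) :=
      Finset.sum_Ico_eq_sub _ hnm
    have h1 : ‖y - ∑ k ∈ Finset.range m, T k (x k)‖ < ε / 2 := hM m hMm
    have h2 : ‖(∑ k ∈ Finset.range m, T k (x k)) - ∑ k ∈ Finset.range n, T k (x k)‖
        ≥ ‖y - ∑ k ∈ Finset.range n, T k (x k)‖ - ‖y - ∑ k ∈ Finset.range m, T k (x k)‖ := by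
      have := norm_sub_norm_le (y - ∑ k ∈ Finset.range n, T k (x k))
        (y - ∑ k ∈ Finset.range m, T k (x k))
      simpa [sub_sub_sub_cancel_left] using this
    rw [hsub]
    linarith
  choose x hx n m hn hnm hblock using H
  -- the gliding hump sequence of indices
  let a : ℕ → ℕ := fun j => Nat.rec 0 (fun _ p => m p) j
  have ha_succ : ∀ j, a (j + 1) = m (a j) := fun j => rfl
  have hamono : StrictMono a := by
    apply strictMono_nat_of_lt_succ
    intro j
    calc a j ≤ n (a j) := hn _
    _ < m (a j) := hnm _
    _ = a (j + 1) := (ha_succ j).symm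
  -- blocks [n (a j), a (j+1)) are pairwise disjoint
  have huniq : ∀ i j k : ℕ, n (a i) ≤ k → k < a (i + 1) → n (a j) ≤ k → k < a (j + 1) →
      i = j := by
    have key : ∀ i j k : ℕ, i < j → n (a i) ≤ k → k < a (i + 1) → n (a j) ≤ k → k < a (j + 1) →
        False := by
      intro i j k hij _ hki hkj _
      have h1 : a (i + 1) ≤ a j := hamono.monotone hij
      have h2 : a j ≤ n (a j) := hn _
      omega
    intro i j k h1 h2 h3 h4
    rcases lt_trichotomy i j with hij | hij | hij
    · exact absurd (key i j k hij h1 h2 h3 h4) (by simp)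
    · exact hij
    · exact absurd (key j i k hij h3 h4 h1 h2) (by simp)
  -- glue the humps together
  let G : ℕ → X := fun k =>
    if hk : ∃ j, n (a j) ≤ k ∧ k < a (j + 1) then x (a hk.choose) k else 0
  have hGbound : ∀ k, ‖G k‖ ≤ 1 := by
    intro k
    by_cases hk : ∃ j, n (a j) ≤ k ∧ k < a (j + 1)
    · simp only [G, dif_pos hk]; exact hx _ k
    · simp [G, dif_neg hk]
  have hGeq : ∀ j k, n (a j) ≤ k → k < a (j + 1) → G k = x (a j) k := by
    intro j k h1 h2
    have hk : ∃ j, n (a j) ≤ k ∧ k < a (j + 1) := ⟨j, h1, h2⟩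
    have := hk.choose_spec
    have hj : hk.choose = j := huniq _ _ k this.1 this.2 h1 h2
    simp only [G, dif_pos hk, hj]
  obtain ⟨y, hy⟩ := h G ⟨1, hGbound⟩
  have hcauchy : CauchySeq (fun p => ∑ k ∈ Finset.range p, T k (G k)) := hy.cauchySeq
  obtain ⟨N, hN⟩ := Metric.cauchySeq_iff.mp hcauchy (ε / 2) (by linarith)
  -- consider the N-th block
  have hq : N ≤ n (a N) := le_trans (hamono.le_apply) (hn _)
  have hp : N ≤ a (N + 1) := le_trans hq (le_of_lt (by rw [ha_succ]; exact hnm _))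
  have hdist := hN (a (N + 1)) hp (n (a N)) hq
  rw [dist_eq_norm] at hdist
  have hnm' : n (a N) ≤ a (N + 1) := le_of_lt (by rw [ha_succ]; exact hnm _)
  have hsub : ∑ k ∈ Finset.Ico (n (a N)) (a (N + 1)), T k (G k)
      = (∑ k ∈ Finset.range (a (N + 1)), T k (G k))
        - ∑ k ∈ Finset.range (n (a N)), T k (G k) :=
    Finset.sum_Ico_eq_sub _ hnm'
  have hcongr : ∑ k ∈ Finset.Ico (n (a N)) (a (N + 1)), T k (G k)
      = ∑ k ∈ Finset.Ico (n (a N)) (a (N + 1)), T k (x (a N) k) := by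
    apply Finset.sum_congr rfl
    intro k hk
    rw [Finset.mem_Ico] at hk
    rw [hGeq N k hk.1 hk.2]
  have hbig : ε / 2 < ‖∑ k ∈ Finset.Ico (n (a N)) (a (N + 1)), T k (G k)‖ := by
    rw [hcongr, ha_succ]
    exact hblock (a N)
  rw [hsub] at hbig
  linarith
end

section
/- Let X be a Banach space. A series ∑_k x_k in X is subseries convergent (∑_k x_{n_k} converges for every subsequence (n_k)) if and only if ∑_k t_k x_k converges for every bounded scalar sequence (t_k); moreover, in a general normed space, subseries convergence implies that ∑_k t_k x_k is a Cauchy series for every bounded scalar sequence (t_k). -/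
open Filter Finset Topology


private lemma key_dual {Z : Type*} [NormedAddCommGroup Z] [NormedSpace ℝ Z]
    (x : ℕ → Z) (t : ℕ → ℝ) (C δ : ℝ) (hC : ∀ k, |t k| ≤ C)
    (F : Finset ℕ) (hδ : ∀ G ⊆ F, ‖∑ k ∈ G, x k‖ ≤ δ) :
    ‖∑ k ∈ F, t k • x k‖ ≤ 2 * C * δ := by
  have hC0 : 0 ≤ C := le_trans (abs_nonneg _) (hC 0)
  have hδ0 : 0 ≤ δ := by simpa using hδ ∅ (Finset.empty_subset F)
  set v := ∑ k ∈ F, t k • x k with hv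
  rcases eq_or_ne v 0 with h0 | h0
  · rw [h0, norm_zero]; positivity
  obtain ⟨g, hg1, hgv⟩ := exists_dual_vector ℝ v (norm_ne_zero_iff.mpr h0)
  have h1 : ‖v‖ = ∑ k ∈ F, t k * g (x k) := by
    have : g v = ∑ k ∈ F, t k * g (x k) := by
      rw [hv, map_sum]
      exact Finset.sum_congr rfl fun k _ => by simp
    rw [← this, hgv]; norm_num
  have h2 : ‖v‖ ≤ C * ∑ k ∈ F, |g (x k)| := by
    rw [h1, Finset.mul_sum]
    calc ∑ k ∈ F, t k * g (x k) ≤ ∑ k ∈ F, |t k * g (x k)| :=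
          Finset.sum_le_sum fun k _ => le_abs_self _
      _ ≤ ∑ k ∈ F, C * |g (x k)| := Finset.sum_le_sum fun k _ => by
          rw [abs_mul]
          exact mul_le_mul_of_nonneg_right (hC k) (abs_nonneg _)
  have habs : ∀ G ⊆ F, |g (∑ k ∈ G, x k)| ≤ δ := by
    intro G hG
    calc |g (∑ k ∈ G, x k)| = ‖g (∑ k ∈ G, x k)‖ := (Real.norm_eq_abs _).symm
      _ ≤ ‖g‖ * ‖∑ k ∈ G, x k‖ := g.le_opNorm _
      _ ≤ 1 * δ := by
          rw [hg1]
          exact mul_le_mul_of_nonneg_left (hδ G hG) zero_le_one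
      _ = δ := one_mul δ
  have h3 : ∑ k ∈ F, |g (x k)| ≤ 2 * δ := by
    classical
    rw [← Finset.sum_filter_add_sum_filter_not F (fun k => 0 ≤ g (x k))]
    have hp : ∑ k ∈ F.filter (fun k => 0 ≤ g (x k)), |g (x k)| ≤ δ := by
      have : ∑ k ∈ F.filter (fun k => 0 ≤ g (x k)), |g (x k)|
          = g (∑ k ∈ F.filter (fun k => 0 ≤ g (x k)), x k) := by
        rw [map_sum]
        exact Finset.sum_congr rfl fun k hk => abs_of_nonneg (Finset.mem_filter.mp hk).2
      rw [this]
      exact le_trans (le_abs_self _) (habs _ (Finset.filter_subset _ _))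
    have hn : ∑ k ∈ F.filter (fun k => ¬ 0 ≤ g (x k)), |g (x k)| ≤ δ := by
      have : ∑ k ∈ F.filter (fun k => ¬ 0 ≤ g (x k)), |g (x k)|
          = -g (∑ k ∈ F.filter (fun k => ¬ 0 ≤ g (x k)), x k) := by
        rw [map_sum, ← Finset.sum_neg_distrib]
        exact Finset.sum_congr rfl fun k hk =>
          abs_of_neg (lt_of_not_ge (Finset.mem_filter.mp hk).2)
      rw [this]
      exact le_trans (neg_le_abs _) (habs _ (Finset.filter_subset _ _))
    linarith
  calc ‖v‖ ≤ C * ∑ k ∈ F, |g (x k)| := h2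
    _ ≤ C * (2 * δ) := mul_le_mul_of_nonneg_left h3 hC0
    _ = 2 * C * δ := by ring


private lemma list_sum_range' {Z : Type*} [AddCommGroup Z] (x : ℕ → Z) (m : ℕ → ℕ)
    (l : List ℕ) (h : ∀ k (hk : k < l.length), m k = l[k]) :
    ∑ k ∈ Finset.range l.length, x (m k) = (l.map x).sum := by
  rw [← Fin.sum_univ_eq_sum_range (fun k => x (m k)) l.length, ← Fin.sum_univ_fun_getElem l x]
  exact Finset.sum_congr rfl fun i _ => by rw [h i.1 i.2]

private lemma claimA {Z : Type*} [NormedAddCommGroup Z] (x : ℕ → Z)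
    (H : ∀ m : ℕ → ℕ, StrictMono m →
      CauchySeq (fun n => ∑ k ∈ Finset.range n, x (m k)))
    {ε : ℝ} (hε : 0 < ε) :
    ∃ N, ∀ F : Finset ℕ, (∀ k ∈ F, N ≤ k) → ‖∑ k ∈ F, x k‖ ≤ ε := by
  classical
  by_contra hcon
  push_neg at hcon
  choose G hG1 hG2 using hcon
  -- blocks
  let B : ℕ → ℕ := fun i => Nat.rec 0 (fun _ b => ((G b).sup id) + 1) i
  let F : ℕ → Finset ℕ := fun i => G (B i)
  have hBsucc : ∀ i, B (i + 1) = ((F i).sup id) + 1 := fun i => rfl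
  have hFlb : ∀ i, ∀ k ∈ F i, B i ≤ k := fun i => hG1 (B i)
  have hFub : ∀ i, ∀ k ∈ F i, k < B (i + 1) := by
    intro i k hk
    rw [hBsucc i]
    exact Nat.lt_succ_of_le (Finset.le_sup (f := id) hk)
  have hFnorm : ∀ i, ε < ‖∑ k ∈ F i, x k‖ := fun i => hG2 (B i)
  have hFne : ∀ i, (F i).Nonempty := by
    intro i
    rcases (F i).eq_empty_or_nonempty with h | h
    · exfalso
      have := hFnorm i
      rw [h] at this
      simp at this
      linarith
    · exact h
  have hBmono : ∀ i, B i < B (i + 1) := by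
    intro i
    obtain ⟨k, hk⟩ := hFne i
    exact lt_of_le_of_lt (hFlb i k hk) (hFub i k hk)
  have hBle : ∀ {i j}, i ≤ j → B i ≤ B j :=
    fun {i j} h => (strictMono_nat_of_lt_succ hBmono).monotone h
  have hcross : ∀ {i j}, i < j → ∀ a ∈ F i, ∀ b ∈ F j, a < b := by
    intro i j hij a ha b hb
    exact lt_of_lt_of_le (hFub i a ha) (le_trans (hBle hij) (hFlb j b hb))
  -- lists
  let L : ℕ → List ℕ := fun i => (F i).sort (· ≤ ·)
  let P : ℕ → List ℕ := fun i => Nat.rec [] (fun j p => p ++ L j) i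
  have hPsucc : ∀ i, P (i + 1) = P i ++ L i := fun i => rfl
  have hmemP : ∀ i a, a ∈ P i → ∃ j, j < i ∧ a ∈ F j := by
    intro i
    induction i with
    | zero => intro a ha; simp [P] at ha
    | succ i ih =>
      intro a ha
      rw [hPsucc i, List.mem_append] at ha
      rcases ha with ha | ha
      · obtain ⟨j, hj, hj2⟩ := ih a ha
        exact ⟨j, Nat.lt_succ_of_lt hj, hj2⟩
      · exact ⟨i, Nat.lt_succ_self i, (Finset.mem_sort _).mp ha⟩
  have hPsorted : ∀ i, (P i).Pairwise (· < ·) := by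
    intro i
    induction i with
    | zero => simp [P]
    | succ i ih =>
      rw [hPsucc i]
      rw [List.pairwise_append]
      refine ⟨ih, List.sortedLT_iff_pairwise.mp (Finset.sortedLT_sort _), ?_⟩
      intro a ha b hb
      obtain ⟨j, hj, hj2⟩ := hmemP i a ha
      exact hcross hj a hj2 b ((Finset.mem_sort _).mp hb)
  have hPlen : ∀ i, i ≤ (P i).length := by
    intro i
    induction i with
    | zero => simp
    | succ i ih =>
      rw [hPsucc i, List.length_append]
      have : 1 ≤ (L i).length := by
        rw [Finset.length_sort]
        exact Finset.card_pos.mpr (hFne i)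
      omega
  have hPpre : ∀ {i j}, i ≤ j → (P i) <+: (P j) := by
    intro i j h
    induction j with
    | zero => rw [Nat.le_zero.mp h]
    | succ j ih =>
      rcases lt_or_eq_of_le h with h' | h'
      · rw [hPsucc j]
        exact (ih (Nat.lt_succ_iff.mp h')).trans (List.prefix_append _ _)
      · rw [h']
  -- the subsequence
  let m : ℕ → ℕ := fun n => (P (n + 1)).getD n 0
  have hm : ∀ i n (h : n < (P i).length), m n = (P i)[n] := by
    intro i n h
    have hn1 : n < (P (n + 1)).length := lt_of_lt_of_le (Nat.lt_succ_self n) (hPlen (n + 1))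
    show (P (n + 1)).getD n 0 = (P i)[n]
    rw [List.getD_eq_getElem _ _ hn1]
    rcases le_total i (n + 1) with hle | hle
    · exact (List.IsPrefix.getElem (hPpre hle) h).symm ▸ rfl
    · exact List.IsPrefix.getElem (hPpre hle) hn1
  have hmmono : StrictMono m := by
    intro a b hab
    have hb : b < (P (b + 1)).length := lt_of_lt_of_le (Nat.lt_succ_self b) (hPlen (b + 1))
    have ha : a < (P (b + 1)).length := lt_trans hab hb
    rw [hm (b + 1) a ha, hm (b + 1) b hb]
    exact List.pairwise_iff_getElem.mp (hPsorted (b + 1)) a b ha hb hab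
  have hcauchy := H m hmmono
  set s : ℕ → Z := fun n => ∑ k ∈ Finset.range n, x (m k) with hs
  have hskey : ∀ i, s ((P i).length) = ((P i).map x).sum := by
    intro i
    exact list_sum_range' x m (P i) (fun k hk => hm i k hk)
  have hblock : ∀ i, s ((P (i + 1)).length) - s ((P i).length) = ∑ k ∈ F i, x k := by
    intro i
    rw [hskey (i + 1), hskey i, hPsucc i, List.map_append, List.sum_append]
    have : ((L i).map x).sum = ∑ k ∈ F i, x k := by
      rw [← Finset.sum_map_toList]
      exact List.Perm.sum_eq (List.Perm.map x (Finset.sort_perm_toList _ _))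
    rw [this]
    abel
  obtain ⟨N, hN⟩ := Metric.cauchySeq_iff.mp hcauchy ε hε
  have h1 : N ≤ (P N).length := hPlen N
  have h2 : N ≤ (P (N + 1)).length := le_trans (Nat.le_succ N) (hPlen (N + 1))
  have := hN _ h2 _ h1
  rw [dist_eq_norm, hblock N] at this
  exact absurd this (not_lt.mpr (le_of_lt (hFnorm N)))

private lemma core_cauchy {Z : Type*} [NormedAddCommGroup Z] [NormedSpace ℝ Z] (z : ℕ → Z)
    (H : ∀ m : ℕ → ℕ, StrictMono m → ∃ y : Z,
        Tendsto (fun n => ∑ k ∈ Finset.range n, z (m k)) atTop (𝓝 y))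
    (t : ℕ → ℝ) (ht : ∃ C : ℝ, ∀ k, |t k| ≤ C) :
    CauchySeq (fun n => ∑ k ∈ Finset.range n, t k • z k) := by
  obtain ⟨C, hC⟩ := ht
  have hC0 : 0 ≤ C := le_trans (abs_nonneg _) (hC 0)
  have H' : ∀ m : ℕ → ℕ, StrictMono m →
      CauchySeq (fun n => ∑ k ∈ Finset.range n, z (m k)) := by
    intro m hm
    obtain ⟨y, hy⟩ := H m hm
    exact hy.cauchySeq
  rw [Metric.cauchySeq_iff]
  intro ε hε
  have hδpos : 0 < ε / (4 * (C + 1)) := by positivity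
  obtain ⟨N, hN⟩ := claimA z H' hδpos
  have key : ∀ p q : ℕ, N ≤ q → q ≤ p →
      dist (∑ k ∈ Finset.range p, t k • z k) (∑ k ∈ Finset.range q, t k • z k) < ε := by
    intro p q hNq hqp
    rw [dist_eq_norm, ← Finset.sum_Ico_eq_sub _ hqp]
    have hsub : ∀ G ⊆ Finset.Ico q p, ‖∑ k ∈ G, z k‖ ≤ ε / (4 * (C + 1)) := by
      intro G hG
      refine hN G fun k hk => ?_
      have := hG hk
      rw [Finset.mem_Ico] at this
      exact le_trans hNq this.1
    calc ‖∑ k ∈ Finset.Ico q p, t k • z k‖ ≤ 2 * C * (ε / (4 * (C + 1))) :=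
          key_dual z t C _ hC _ hsub
      _ ≤ 2 * (C + 1) * (ε / (4 * (C + 1))) := by
          have : 0 < C + 1 := by linarith
          have h4 : 0 < ε / (4 * (C + 1)) := hδpos
          nlinarith
      _ = ε / 2 := by field_simp; ring
      _ < ε := by linarith
  refine ⟨N, fun p hp q hq => ?_⟩
  rcases le_total q p with h | h
  · exact key p q hq h
  · rw [dist_comm]
    exact key q p hp h

/-- In a Banach space `X`, a series is subseries convergent iff it is
`ℓ∞`-multiplier convergent; moreover, in a general normed space `Z`, subseries
convergence implies that the series is `ℓ∞`-multiplier Cauchy. -/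
theorem subseries_convergent_iff_linfty_multiplier
    {X Z : Type*} [NormedAddCommGroup X] [NormedSpace ℝ X] [CompleteSpace X]
    [NormedAddCommGroup Z] [NormedSpace ℝ Z] :
    (∀ x : ℕ → X,
      ((∀ m : ℕ → ℕ, StrictMono m → ∃ y : X,
          Tendsto (fun n => ∑ k ∈ Finset.range n, x (m k)) atTop (𝓝 y)) ↔
       (∀ t : ℕ → ℝ, (∃ C : ℝ, ∀ k, |t k| ≤ C) → ∃ y : X,
          Tendsto (fun n => ∑ k ∈ Finset.range n, t k • x k) atTop (𝓝 y)))) ∧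
    (∀ z : ℕ → Z,
      (∀ m : ℕ → ℕ, StrictMono m → ∃ y : Z,
          Tendsto (fun n => ∑ k ∈ Finset.range n, z (m k)) atTop (𝓝 y)) →
      ∀ t : ℕ → ℝ, (∃ C : ℝ, ∀ k, |t k| ≤ C) →
        CauchySeq (fun n => ∑ k ∈ Finset.range n, t k • z k)) := by
  classical
  constructor
  · intro x
    constructor
    · intro H t ht
      exact cauchySeq_tendsto_of_complete (core_cauchy x H t ht)
    · intro H m hm
      set t : ℕ → ℝ := fun j => if ∃ k, m k = j then 1 else 0 with hts
      have ht : ∃ C : ℝ, ∀ k, |t k| ≤ C := by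
        refine ⟨1, fun k => ?_⟩
        by_cases h : ∃ i, m i = k <;> simp [hts, h]
      obtain ⟨y, hy⟩ := H t ht
      refine ⟨y, ?_⟩
      have hkey : ∀ n, ∑ j ∈ Finset.range (m n), t j • x j
          = ∑ k ∈ Finset.range n, x (m k) := by
        intro n
        have hfe : (Finset.range (m n)).filter (fun j => ∃ k, m k = j)
            = (Finset.range n).image m := by
          ext j
          simp only [Finset.mem_filter, Finset.mem_range, Finset.mem_image]
          constructor
          · rintro ⟨hj, k, rfl⟩
            exact ⟨k, hm.lt_iff_lt.mp hj, rfl⟩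
          · rintro ⟨k, hk, rfl⟩
            exact ⟨hm hk, k, rfl⟩
        calc ∑ j ∈ Finset.range (m n), t j • x j
            = ∑ j ∈ (Finset.range (m n)).filter (fun j => ∃ k, m k = j), x j := by
              rw [Finset.sum_filter]
              refine Finset.sum_congr rfl fun j _ => ?_
              by_cases h : ∃ k, m k = j <;> simp [hts, h]
          _ = ∑ j ∈ (Finset.range n).image m, x j := by rw [hfe]
          _ = ∑ k ∈ Finset.range n, x (m k) :=
              Finset.sum_image fun a _ b _ h => hm.injective h
      have : (fun n => ∑ k ∈ Finset.range n, x (m k))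
          = (fun N => ∑ j ∈ Finset.range N, t j • x j) ∘ m := by
        funext n
        exact (hkey n).symm
      rw [this]
      exact hy.comp (hm.tendsto_atTop)
  · intro z H t ht
    exact core_cauchy z H t ht
end
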